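/- arXiv:1306.3650 — 2 statements merged into one kernel-verified Lean document; each statement's English description precedes it below -/
import Mathlib

section
/- Let D be an integral domain with quotient field K and let ⋆ be a semistar operation of D. Then: (1) ⋏^{⋆_f} is a semistar operation of D[X] of finite type, and consequently ⋏^{⋆_f} = (⋏^{⋆_f})_f ≤ (⋏^⋆)_f ≤ (▲^⋆)_f; (2) ⋏^{tilde⋆} is a stable semistar operation of D[X] of finite type, and consequently ⋏^{tilde⋆} = tilde(⋏^{tilde⋆}) ≤ tilde(⋏^⋆) ≤ tilde(▲^⋆). -/
/- Preliminaries: semistar operations on an integral domain `R` with quotient field `F`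
(submodules of `F` over `R`), polynomial extension of semistar operations from `D`
to `D[X]` (viewed inside the quotient field `K(X) = RatFunc K` of `D[X]`). -/

open Polynomial Pointwise

set_option synthInstance.maxHeartbeats 1000000
set_option maxHeartbeats 1000000

open scoped Classical

noncomputable section

section Generic

variable (R F : Type*) [CommRing R] [Field F] [Algebra R F]

/-- `o` is a semistar operation of `R` (on the nonzero `R`-submodules of the
quotient field `F`). -/
def IsSemistarOp (o : Submodule R F → Submodule R F) : Prop :=
  (∀ x : F, x ≠ 0 → ∀ E : Submodule R F, E ≠ ⊥ → o (x • E) = x • o E) ∧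
  (∀ E G : Submodule R F, E ≠ ⊥ → G ≠ ⊥ → E ≤ G → o E ≤ o G) ∧
  (∀ E : Submodule R F, E ≠ ⊥ → E ≤ o E) ∧
  (∀ E : Submodule R F, E ≠ ⊥ → o (o E) = o E)

/-- The finite-type operation `⋆_f` associated to `⋆`:
`E^{⋆_f} = ⋃ { G^⋆ : G nonzero finitely generated, G ⊆ E }`. -/
def finTypeFun (o : Submodule R F → Submodule R F) : Submodule R F → Submodule R F :=
  fun E => ⨆ (G : Submodule R F) (_ : G ≠ ⊥) (_ : G.FG) (_ : G ≤ E), o G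

/-- `⋆` is of finite type, i.e. `⋆ = ⋆_f`. -/
def IsFiniteTypeFun (o : Submodule R F → Submodule R F) : Prop :=
  ∀ E : Submodule R F, E ≠ ⊥ → o E = finTypeFun R F o E

/-- `⋆` is stable: `(E ∩ G)^⋆ = E^⋆ ∩ G^⋆`. -/
def IsStableFun (o : Submodule R F → Submodule R F) : Prop :=
  ∀ E G : Submodule R F, E ≠ ⊥ → G ≠ ⊥ → o (E ⊓ G) = o E ⊓ o G

/-- An ideal of `R` viewed as an `R`-submodule of `F`. -/
def idealSub (J : Ideal R) : Submodule R F := Submodule.map (Algebra.linearMap R F) J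

/-- `(E : J) = { x ∈ F : xJ ⊆ E }` for an ideal `J` of `R`. -/
def colonIdeal (E : Submodule R F) (J : Ideal R) : Submodule R F where
  carrier := { x : F | ∀ a ∈ J, a • x ∈ E }
  add_mem' := fun {x y} hx hy a ha => by
    simpa [smul_add] using E.add_mem (hx a ha) (hy a ha)
  zero_mem' := fun a _ => by simpa using E.zero_mem
  smul_mem' := fun r x hx a ha => by
    rw [← mul_smul, mul_comm, mul_smul]
    exact E.smul_mem r (hx a ha)

/-- The stable finite-type operation `tilde ⋆` associated to `⋆`:
`E^{tilde ⋆} = ⋃ { (E : J) : J nonzero finitely generated integral ideal with J^⋆ = R^⋆ }`. -/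
def tildeFun (o : Submodule R F → Submodule R F) : Submodule R F → Submodule R F :=
  fun E => ⨆ (J : Ideal R) (_ : J ≠ ⊥) (_ : J.FG)
    (_ : o (idealSub R F J) = o (1 : Submodule R F)), colonIdeal R F E J

/-- The `v`-operation: `E^v = (R : (R : E))` for `E` a nonzero fractional ideal,
and `E^v = F` otherwise. -/
def vFun : Submodule R F → Submodule R F := fun E =>
  if ∃ d : R, d ≠ 0 ∧ ∀ x ∈ E, d • x ∈ (1 : Submodule R F) then
    (1 : Submodule R F) / ((1 : Submodule R F) / E)
  else ⊤

/-- The `eab` operation `⋆_a` associated to `⋆`. -/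
def aFun (o : Submodule R F → Submodule R F) : Submodule R F → Submodule R F := fun E =>
  ⨆ (G : Submodule R F) (_ : G ≠ ⊥) (_ : G.FG) (_ : G ≤ E),
    ⨆ (H : Submodule R F) (_ : H ≠ ⊥) (_ : H.FG), o (G * H) / o H

/-- `I` is a quasi-`⋆`-ideal: a nonzero integral ideal with `I^⋆ ∩ R = I`. -/
def isQuasiIdealFun (o : Submodule R F → Submodule R F) (I : Ideal R) : Prop :=
  I ≠ ⊥ ∧ (o (idealSub R F I)).comap (Algebra.linearMap R F) = I

/-- `I` is a quasi-`⋆`-maximal ideal: maximal among proper quasi-`⋆`-ideals. -/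
def isQuasiMaximalFun (o : Submodule R F → Submodule R F) (I : Ideal R) : Prop :=
  isQuasiIdealFun R F o I ∧ I ≠ ⊤ ∧
    ∀ J : Ideal R, isQuasiIdealFun R F o J → J ≠ ⊤ → I ≤ J → I = J

/-- The `v`-operation relative to an overring `R'` (an `R`-submodule of `F`):
`B ↦ (R' : (R' : B))` for `B` a nonzero fractional ideal of `R'`, `F` otherwise. -/
def vRelFun (R' B : Submodule R F) : Submodule R F :=
  if ∃ z ∈ R', z ≠ 0 ∧ ∀ x ∈ B, z * x ∈ R' then R' / (R' / B) else ⊤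

/-- The `t`-operation relative to an overring `R'`: finite-type operation associated to
the `v`-operation of `R'` (the union being over nonzero finitely generated
`R'`-submodules contained in `B`). -/
def tRelFun (R' B : Submodule R F) : Submodule R F :=
  ⨆ (G : Submodule R F) (_ : G ≠ ⊥)
    (_ : ∃ S : Finset F, G = R' * Submodule.span R (S : Set F)) (_ : G ≤ B),
    vRelFun R F R' G

end Generic

section Poly

variable (D K : Type*) [CommRing D] [IsDomain D] [Field K] [Algebra D K] [IsFractionRing D K]

/-- The canonical ring homomorphism `D[X] → K(X)`. -/
def polyToRF : Polynomial D →+* RatFunc K :=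
  (algebraMap (Polynomial K) (RatFunc K)).comp (Polynomial.mapRingHom (algebraMap D K))

/-- `K(X)` is an algebra over `D[X]`; in fact it is the quotient field of `D[X]`. -/
instance (priority := 100) : Algebra (Polynomial D) (RatFunc K) := (polyToRF D K).toAlgebra

/-- For a `D`-submodule `E` of `K`, the `D[X]`-submodule `E[X]` of `K(X)`:
polynomials all of whose coefficients lie in `E`. -/
def polyExt (E : Submodule D K) : Submodule (Polynomial D) (RatFunc K) where
  carrier := { f : RatFunc K | ∃ p : Polynomial K, (∀ n, p.coeff n ∈ E) ∧
      f = algebraMap (Polynomial K) (RatFunc K) p }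
  add_mem' := by
    rintro f g ⟨p, hp, rfl⟩ ⟨q, hq, rfl⟩
    exact ⟨p + q, fun n => by simpa using E.add_mem (hp n) (hq n), by simp⟩
  zero_mem' := ⟨0, fun n => by simpa using E.zero_mem, by simp⟩
  smul_mem' := by
    rintro c f ⟨p, hp, rfl⟩
    refine ⟨Polynomial.map (algebraMap D K) c * p, fun n => ?_, ?_⟩
    · rw [Polynomial.coeff_mul]
      refine Submodule.sum_mem E fun ij _ => ?_
      rw [Polynomial.coeff_map, ← Algebra.smul_def]
      exact E.smul_mem _ (hp ij.2)
    · rw [Algebra.smul_def, RingHom.algebraMap_toAlgebra, map_mul]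
      unfold polyToRF
      simp

/-- The contraction `B ∩ K` of a `D[X]`-submodule `B` of `K(X)` to a `D`-submodule of `K`. -/
def contractToBase (B : Submodule (Polynomial D) (RatFunc K)) : Submodule D K where
  carrier := { x : K | algebraMap K (RatFunc K) x ∈ B }
  add_mem' := fun {x y} hx hy => by
    simpa [Set.mem_setOf_eq, map_add] using B.add_mem hx hy
  zero_mem' := by simpa using B.zero_mem
  smul_mem' := fun d x hx => by
    have h : algebraMap K (RatFunc K) (d • x)
        = (Polynomial.C d : Polynomial D) • (algebraMap K (RatFunc K) x) := by
      rw [Algebra.smul_def d x, map_mul, Algebra.smul_def, RingHom.algebraMap_toAlgebra]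
      unfold polyToRF
      simp only [RingHom.coe_comp, Function.comp_apply, Polynomial.coe_mapRingHom,
        Polynomial.map_C, RatFunc.algebraMap_C, RatFunc.algebraMap_eq_C]
    show algebraMap K (RatFunc K) (d • x) ∈ B
    rw [h]
    exact B.smul_mem (Polynomial.C d) hx

/-- The content `c_D(S)`: the `D`-submodule of `K` generated by the coefficients of all
polynomials belonging to `S`. -/
def contentOf (S : Set (RatFunc K)) : Submodule D K :=
  Submodule.span D { x : K | ∃ p : Polynomial K,
    algebraMap (Polynomial K) (RatFunc K) p ∈ S ∧ ∃ n, p.coeff n = x }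

/-- The semistar operation `▲^⋆_T` of `D[X]` associated to a semistar operation `⋆` of `D`
and an overring `T` of `D`:
`A ↦ ⋂ { z⁻¹ (c_D(zA))^⋆[X] : z ∈ (T[X] : A), z ≠ 0 }` if `(T[X] : A) ≠ 0`, else `A ↦ K(X)`. -/
def bigTriT (o : Submodule D K → Submodule D K) (T : Subalgebra D K) :
    Submodule (Polynomial D) (RatFunc K) → Submodule (Polynomial D) (RatFunc K) := fun A =>
  if ∃ z : RatFunc K, z ≠ 0 ∧ ∀ a ∈ A, z * a ∈ polyExt D K (Subalgebra.toSubmodule T) then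
    ⨅ (z : RatFunc K) (_ : z ≠ 0) (_ : ∀ a ∈ A, z * a ∈ polyExt D K (Subalgebra.toSubmodule T)),
      z⁻¹ • polyExt D K (o (contentOf D K (z • (A : Set (RatFunc K)))))
  else ⊤

/-- `▲^⋆ := ▲^⋆_K`, the largest strict extension of `⋆` to `D[X]`. -/
def bigTri (o : Submodule D K → Submodule D K) :
    Submodule (Polynomial D) (RatFunc K) → Submodule (Polynomial D) (RatFunc K) :=
  bigTriT D K o ⊤

/-- `b` is an extension of `⋆` to `D[X]` : `E^⋆ = (E[X])^b ∩ K`. -/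
def IsExtensionFun (o : Submodule D K → Submodule D K)
    (b : Submodule (Polynomial D) (RatFunc K) → Submodule (Polynomial D) (RatFunc K)) : Prop :=
  ∀ E : Submodule D K, E ≠ ⊥ → o E = contractToBase D K (b (polyExt D K E))

/-- `b` is a strict extension of `⋆` to `D[X]` : `(E[X])^b = E^⋆[X]`. -/
def IsStrictExtensionFun (o : Submodule D K → Submodule D K)
    (b : Submodule (Polynomial D) (RatFunc K) → Submodule (Polynomial D) (RatFunc K)) : Prop :=
  ∀ E : Submodule D K, E ≠ ⊥ → b (polyExt D K E) = polyExt D K (o E)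

/-- `⋏^⋆ : A ↦ ⋂ { A^★ : ★ a semistar operation of D[X] extending ⋆ }`. -/
def curlyFun (o : Submodule D K → Submodule D K) :
    Submodule (Polynomial D) (RatFunc K) → Submodule (Polynomial D) (RatFunc K) := fun A =>
  ⨅ (b : Submodule (Polynomial D) (RatFunc K) → Submodule (Polynomial D) (RatFunc K))
    (_ : IsSemistarOp (Polynomial D) (RatFunc K) b) (_ : IsExtensionFun D K o b), b A

/-- The localization `D_Q` of `D` at a prime ideal `Q`, as a `D`-submodule of `K`. -/
def locSub (Q : Ideal D) : Submodule D K :=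
  Submodule.span D { x : K | ∃ s : D, s ∉ Q ∧ s • x ∈ (1 : Submodule D K) }

/-- The content of an ideal `I` of `D[X]`: the `D`-submodule of `K` generated by the
coefficients of the polynomials in `I`. -/
def contentOfIdeal (I : Ideal (Polynomial D)) : Submodule D K :=
  Submodule.span D { x : K | ∃ p ∈ I, ∃ n, algebraMap D K (Polynomial.coeff p n) = x }

/-- The Nagata ring `D_Q(X)`, as a subset of `K(X)`: fractions `f/g` with
`f, g ∈ D_Q[X]` and the coefficients of `g` generating the unit ideal of `D_Q`. -/
def nagataSet (Q : Ideal D) : Set (RatFunc K) :=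
  { u : RatFunc K | ∃ g : Polynomial K, (∀ n, g.coeff n ∈ locSub D K Q) ∧
      locSub D K Q * Submodule.span D { x : K | ∃ n, g.coeff n = x } = locSub D K Q ∧
      u * algebraMap (Polynomial K) (RatFunc K) g ∈ polyExt D K (locSub D K Q) }

end Poly

/-! ### Auxiliary generic lemmas -/

namespace SStar

section GenericLemmas

variable {R F : Type*} [CommRing R] [Field F] [Algebra R F]

lemma mem_smulS {x : F} {E : Submodule R F} {y : F} : y ∈ x • E ↔ ∃ e ∈ E, x * e = y := by
  show y ∈ x • (E : Set F) ↔ _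
  simp only [Set.mem_smul_set, smul_eq_mul, SetLike.mem_coe]

lemma smulS_mem {x : F} {E : Submodule R F} {e : F} (he : e ∈ E) : x * e ∈ x • E :=
  mem_smulS.2 ⟨e, he, rfl⟩

lemma ne_bot_iff {E : Submodule R F} : E ≠ ⊥ ↔ ∃ x ∈ E, x ≠ 0 := by
  rw [Submodule.ne_bot_iff]

lemma ne_bot_mono {E G : Submodule R F} (h : E ≤ G) (hE : E ≠ ⊥) : G ≠ ⊥ := by
  obtain ⟨x, hx, hx0⟩ := ne_bot_iff.1 hE
  exact ne_bot_iff.2 ⟨x, h hx, hx0⟩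

lemma smulS_smulS (a b : F) (E : Submodule R F) : a • b • E = (a * b) • E := by
  rw [smul_smul]

lemma one_smulS (E : Submodule R F) : (1 : F) • E = E := one_smul _ E

lemma inv_smulS_smulS {x : F} (hx : x ≠ 0) (E : Submodule R F) : x⁻¹ • x • E = E := by
  rw [smulS_smulS, inv_mul_cancel₀ hx, one_smulS]

lemma smulS_inv_smulS {x : F} (hx : x ≠ 0) (E : Submodule R F) : x • x⁻¹ • E = E := by
  rw [smulS_smulS, mul_inv_cancel₀ hx, one_smulS]

lemma smulS_mono (x : F) {E G : Submodule R F} (h : E ≤ G) : x • E ≤ x • G := by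
  intro y hy
  obtain ⟨e, he, rfl⟩ := mem_smulS.1 hy
  exact smulS_mem (h he)

lemma smulS_le_iff {x : F} (hx : x ≠ 0) {E G : Submodule R F} : x • E ≤ G ↔ E ≤ x⁻¹ • G := by
  constructor
  · intro h
    have := smulS_mono x⁻¹ h
    rwa [inv_smulS_smulS hx] at this
  · intro h
    have := smulS_mono x h
    rwa [smulS_inv_smulS hx] at this

lemma mem_smulS_iff_inv {x : F} (hx : x ≠ 0) {E : Submodule R F} {y : F} :
    y ∈ x • E ↔ x⁻¹ * y ∈ E := by
  rw [mem_smulS]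
  constructor
  · rintro ⟨e, he, rfl⟩
    rwa [← mul_assoc, inv_mul_cancel₀ hx, one_mul]
  · intro h
    exact ⟨x⁻¹ * y, h, by rw [← mul_assoc, mul_inv_cancel₀ hx, one_mul]⟩

lemma smulS_ne_bot {x : F} (hx : x ≠ 0) {E : Submodule R F} (hE : E ≠ ⊥) : x • E ≠ ⊥ := by
  obtain ⟨e, he, he0⟩ := ne_bot_iff.1 hE
  exact ne_bot_iff.2 ⟨x * e, smulS_mem he, mul_ne_zero hx he0⟩

lemma smulS_top {x : F} (hx : x ≠ 0) : x • (⊤ : Submodule R F) = ⊤ := by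
  ext y
  simp only [Submodule.mem_top, iff_true, mem_smulS]
  exact ⟨x⁻¹ * y, trivial, by field_simp⟩

lemma smulS_iInf {ι : Sort*} {x : F} (hx : x ≠ 0) (f : ι → Submodule R F) :
    x • ⨅ i, f i = ⨅ i, x • f i := by
  refine le_antisymm (le_iInf fun i => smulS_mono x (iInf_le f i)) ?_
  have h2 : x⁻¹ • ⨅ i, x • f i ≤ ⨅ i, f i := by
    refine le_iInf fun i => ?_
    have := smulS_mono x⁻¹ (iInf_le (fun i => x • f i) i)
    rwa [inv_smulS_smulS hx] at this
  have := smulS_mono x h2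
  rwa [smulS_inv_smulS hx] at this

lemma smulS_iSup {ι : Sort*} (x : F) (f : ι → Submodule R F) :
    x • ⨆ i, f i = ⨆ i, x • f i := by
  show Submodule.map _ _ = _
  rw [Submodule.map_iSup]
  rfl

variable {o o' : Submodule R F → Submodule R F}

lemma ssLe (h : IsSemistarOp R F o) {E G : Submodule R F} (hE : E ≠ ⊥) (hG : G ≠ ⊥)
    (hEG : E ≤ G) : o E ≤ o G := h.2.1 E G hE hG hEG

lemma ssExt (h : IsSemistarOp R F o) {E : Submodule R F} (hE : E ≠ ⊥) : E ≤ o E := h.2.2.1 E hE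

lemma ssIdem (h : IsSemistarOp R F o) {E : Submodule R F} (hE : E ≠ ⊥) : o (o E) = o E :=
  h.2.2.2 E hE

lemma ssSmul (h : IsSemistarOp R F o) {x : F} (hx : x ≠ 0) {E : Submodule R F} (hE : E ≠ ⊥) :
    o (x • E) = x • o E := h.1 x hx E hE

lemma ssNeBot (h : IsSemistarOp R F o) {E : Submodule R F} (hE : E ≠ ⊥) : o E ≠ ⊥ :=
  ne_bot_mono (ssExt h hE) hE

lemma one_mem_oneS : (1 : F) ∈ (1 : Submodule R F) := Submodule.one_le.1 le_rfl

lemma one_ne_bot : (1 : Submodule R F) ≠ ⊥ :=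
  ne_bot_iff.2 ⟨1, one_mem_oneS, one_ne_zero⟩

lemma nontrivial_of_alg (f : R →+* F) : Nontrivial R :=
  ⟨0, 1, fun h01 => one_ne_zero (α := F)
    (by rw [← f.map_one, ← h01, map_zero])⟩

lemma mul_ne_bot {M N : Submodule R F} (hM : M ≠ ⊥) (hN : N ≠ ⊥) : M * N ≠ ⊥ := by
  obtain ⟨m, hm, hm0⟩ := ne_bot_iff.1 hM
  obtain ⟨n, hn, hn0⟩ := ne_bot_iff.1 hN
  exact ne_bot_iff.2 ⟨m * n, Submodule.mul_mem_mul hm hn, mul_ne_zero hm0 hn0⟩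

lemma smulS_le_mul {m : F} {M N : Submodule R F} (hm : m ∈ M) : m • N ≤ M * N := by
  intro y hy
  obtain ⟨n, hn, rfl⟩ := mem_smulS.1 hy
  exact Submodule.mul_mem_mul hm hn

lemma mul_oLe (h : IsSemistarOp R F o) {M N : Submodule R F} (hM : M ≠ ⊥) (hN : N ≠ ⊥) :
    M * o N ≤ o (M * N) := by
  rw [Submodule.mul_le]
  intro m hm n hn
  rcases eq_or_ne m 0 with rfl | hm0
  · rw [zero_mul]; exact Submodule.zero_mem _
  · have h1 : m * n ∈ m • o N := smulS_mem hn
    rw [← ssSmul h hm0 hN] at h1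
    exact ssLe h (smulS_ne_bot hm0 hN) (mul_ne_bot hM hN) (smulS_le_mul hm) h1

lemma ss_cond_of_one_mem (h : IsSemistarOp R F o) {M : Submodule R F} (hM : M ≠ ⊥) (hM1 : M ≤ 1)
    (hmem : (1 : F) ∈ o M) : o M = o 1 := by
  refine le_antisymm (ssLe h hM one_ne_bot hM1) ?_
  have h1 : (1 : Submodule R F) ≤ o M := Submodule.one_le.2 hmem
  have := ssLe h one_ne_bot (ssNeBot h hM) h1
  rwa [ssIdem h hM] at this

lemma ss_cond_mul (h : IsSemistarOp R F o) {M N : Submodule R F} (hM : M ≠ ⊥) (hN : N ≠ ⊥)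
    (hM1 : M ≤ 1) (hN1 : N ≤ 1) (hMo : o M = o 1) (hNo : o N = o 1) : o (M * N) = o 1 := by
  have hMN : M * N ≠ ⊥ := mul_ne_bot hM hN
  refine le_antisymm (ssLe h hMN one_ne_bot (by simpa using mul_le_mul' hM1 hN1)) ?_
  have hone : (1 : F) ∈ o N := hNo ▸ ssExt h one_ne_bot one_mem_oneS
  have h1 : M ≤ M * o N := by
    intro m hm
    simpa using Submodule.mul_mem_mul hm hone
  have hMoN : M * o N ≠ ⊥ := ne_bot_mono h1 hM
  have h2 : o M ≤ o (M * o N) := ssLe h hM hMoN h1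
  have h3 : o (M * o N) ≤ o (o (M * N)) :=
    ssLe h hMoN (ssNeBot h hMN) (mul_oLe h hM hN)
  rw [ssIdem h hMN] at h3
  rw [← hMo]
  exact h2.trans h3

end GenericLemmas

end SStar

namespace SStar

section GenericLemmas2

variable {R F : Type*} [CommRing R] [Field F] [Algebra R F]
variable {o o' : Submodule R F → Submodule R F}

lemma mem_idealSub {J : Ideal R} {x : F} :
    x ∈ idealSub R F J ↔ ∃ a ∈ J, algebraMap R F a = x := by
  simp [idealSub, Submodule.mem_map, Algebra.linearMap_apply]

lemma algebraMap_mem_idealSub {J : Ideal R} {a : R} (ha : a ∈ J) :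
    algebraMap R F a ∈ idealSub R F J := mem_idealSub.2 ⟨a, ha, rfl⟩

lemma idealSub_le_one (J : Ideal R) : idealSub R F J ≤ (1 : Submodule R F) := by
  intro x hx
  obtain ⟨a, _, rfl⟩ := mem_idealSub.1 hx
  rw [Submodule.one_eq_range]
  exact ⟨a, rfl⟩

lemma idealSub_top : idealSub R F ⊤ = (1 : Submodule R F) := by
  rw [Submodule.one_eq_range, idealSub, Submodule.map_top]

lemma idealSub_mono {I J : Ideal R} (h : I ≤ J) : idealSub R F I ≤ idealSub R F J :=
  Submodule.map_mono h

lemma idealSub_mul (I J : Ideal R) :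
    idealSub R F (I * J) = idealSub R F I * idealSub R F J := by
  have h := Submodule.map_mul I J (Algebra.ofId R F)
  exact h

lemma idealSub_ne_bot (hinj : Function.Injective (algebraMap R F)) {J : Ideal R} (hJ : J ≠ ⊥) :
    idealSub R F J ≠ ⊥ := by
  obtain ⟨a, ha, ha0⟩ := Submodule.exists_mem_ne_zero_of_ne_bot hJ
  refine ne_bot_iff.2 ⟨algebraMap R F a, algebraMap_mem_idealSub ha, fun h0 => ha0 ?_⟩
  exact hinj (by rw [h0, map_zero])

lemma le_of_idealSub_le (hinj : Function.Injective (algebraMap R F)) {I J : Ideal R}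
    (h : idealSub R F I ≤ idealSub R F J) : I ≤ J := by
  intro a ha
  obtain ⟨b, hb, hba⟩ := mem_idealSub.1 (h (algebraMap_mem_idealSub ha))
  rwa [← hinj hba]

lemma mem_colonIdeal {E : Submodule R F} {J : Ideal R} {x : F} :
    x ∈ colonIdeal R F E J ↔ ∀ a ∈ J, a • x ∈ E := Iff.rfl

lemma colonIdeal_mono {E E' : Submodule R F} (h : E ≤ E') (J : Ideal R) :
    colonIdeal R F E J ≤ colonIdeal R F E' J := fun _x hx a ha => h (hx a ha)

lemma colonIdeal_anti {J J' : Ideal R} (h : J' ≤ J) (E : Submodule R F) :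
    colonIdeal R F E J ≤ colonIdeal R F E J' := fun _x hx a ha => hx a (h ha)

lemma self_le_colonIdeal (E : Submodule R F) (J : Ideal R) : E ≤ colonIdeal R F E J :=
  fun _x hx => fun a _ => E.smul_mem a hx

lemma colonIdeal_top_eq (E : Submodule R F) : colonIdeal R F E ⊤ = E := by
  refine le_antisymm (fun x hx => ?_) (self_le_colonIdeal E ⊤)
  have := hx 1 trivial
  rwa [one_smul] at this

lemma colonIdeal_smulS {x : F} (hx : x ≠ 0) (E : Submodule R F) (J : Ideal R) :
    colonIdeal R F (x • E) J = x • colonIdeal R F E J := by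
  ext y
  rw [mem_smulS_iff_inv hx, mem_colonIdeal, mem_colonIdeal]
  refine forall₂_congr fun a ha => ?_
  rw [mem_smulS_iff_inv hx, mul_smul_comm]

lemma colonIdeal_inf_le {E G : Submodule R F} {J1 J2 : Ideal R} :
    colonIdeal R F E J1 ⊓ colonIdeal R F G J2 ≤ colonIdeal R F (E ⊓ G) (J1 * J2) := by
  rintro x ⟨h1, h2⟩ a ha
  refine Submodule.mul_induction_on ha (fun m hm n hn => ⟨?_, ?_⟩)
    (fun u v hu hv => by rw [add_smul]; exact Submodule.add_mem _ hu hv)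
  · rw [mul_comm, mul_smul]
    exact E.smul_mem n (h1 m hm)
  · rw [mul_smul]
    exact G.smul_mem m (h2 n hn)

lemma mem_colonIdeal_span {T : Set R} {E : Submodule R F} {x : F}
    (h : ∀ c ∈ T, c • x ∈ E) : x ∈ colonIdeal R F E (Ideal.span T) := by
  intro a ha
  induction ha using Submodule.span_induction with
  | mem c hc => exact h c hc
  | zero => rw [zero_smul]; exact E.zero_mem
  | add u v _ _ hu hv => rw [add_smul]; exact E.add_mem hu hv
  | smul r u _ hu => rw [smul_assoc]; exact E.smul_mem r hu

lemma colonIdeal_le_inf {E G : Submodule R F} (J : Ideal R) :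
    colonIdeal R F (E ⊓ G) J ≤ colonIdeal R F E J ⊓ colonIdeal R F G J :=
  le_inf (colonIdeal_mono inf_le_left J) (colonIdeal_mono inf_le_right J)

end GenericLemmas2

end SStar

namespace SStar

section GenericLemmas3

variable {R F : Type*} [CommRing R] [Field F] [Algebra R F]
variable {o o' : Submodule R F → Submodule R F}

/-- Condition on ideals used in `tildeFun`. -/
def TC (o : Submodule R F → Submodule R F) (J : Ideal R) : Prop :=
  J ≠ ⊥ ∧ J.FG ∧ o (idealSub R F J) = o (1 : Submodule R F)

lemma le_tildeFun {J : Ideal R} (hJ : TC o J) (E : Submodule R F) :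
    colonIdeal R F E J ≤ tildeFun R F o E := by
  obtain ⟨h1, h2, h3⟩ := hJ
  exact le_iSup_of_le J (le_iSup_of_le h1 (le_iSup_of_le h2 (le_iSup_of_le h3 le_rfl)))

lemma tildeFun_le_of {E M : Submodule R F}
    (hco : ∀ J : Ideal R, TC o J → colonIdeal R F E J ≤ M) : tildeFun R F o E ≤ M :=
  iSup_le fun J => iSup_le fun h1 => iSup_le fun h2 => iSup_le fun h3 => hco J ⟨h1, h2, h3⟩

lemma tildeFun_eq_iSup (o : Submodule R F → Submodule R F) (E : Submodule R F) :
    tildeFun R F o E = ⨆ J : {J : Ideal R // TC o J}, colonIdeal R F E J.1 :=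
  le_antisymm (tildeFun_le_of fun J hJ => le_iSup_of_le ⟨J, hJ⟩ le_rfl)
    (iSup_le fun J => le_tildeFun J.2 E)

lemma TC_top : TC o (⊤ : Ideal R) := by
  have : Nontrivial R := nontrivial_of_alg (algebraMap R F)
  refine ⟨Submodule.ne_bot_iff _ |>.2 ⟨1, trivial, one_ne_zero⟩, ⟨{1}, by simp⟩, by
    rw [idealSub_top]⟩

lemma TC_mul [IsDomain R] (hinj : Function.Injective (algebraMap R F))
    (h : IsSemistarOp R F o) {J1 J2 : Ideal R} (hJ1 : TC o J1) (hJ2 : TC o J2) :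
    TC o (J1 * J2) := by
  refine ⟨?_, Submodule.FG.mul hJ1.2.1 hJ2.2.1, ?_⟩
  · rw [Ne, Ideal.mul_eq_bot]
    push_neg
    exact ⟨hJ1.1, hJ2.1⟩
  · rw [idealSub_mul]
    exact ss_cond_mul h (idealSub_ne_bot hinj hJ1.1) (idealSub_ne_bot hinj hJ2.1)
      (idealSub_le_one _) (idealSub_le_one _) hJ1.2.2 hJ2.2.2

lemma tilde_directed [IsDomain R] (hinj : Function.Injective (algebraMap R F))
    (h : IsSemistarOp R F o) (E : Submodule R F) :
    Directed (· ≤ ·) (fun J : {J : Ideal R // TC o J} => colonIdeal R F E J.1) := by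
  rintro ⟨J1, h1⟩ ⟨J2, h2⟩
  exact ⟨⟨J1 * J2, TC_mul hinj h h1 h2⟩,
    colonIdeal_anti Ideal.mul_le_left E, colonIdeal_anti Ideal.mul_le_right E⟩

lemma mem_tildeFun [IsDomain R] (hinj : Function.Injective (algebraMap R F))
    (h : IsSemistarOp R F o) {E : Submodule R F} {x : F} :
    x ∈ tildeFun R F o E ↔ ∃ J : Ideal R, TC o J ∧ x ∈ colonIdeal R F E J := by
  rw [tildeFun_eq_iSup]
  have : Nonempty {J : Ideal R // TC o J} := ⟨⟨⊤, TC_top⟩⟩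
  rw [Submodule.mem_iSup_of_directed _ (tilde_directed hinj h E)]
  constructor
  · rintro ⟨⟨J, hJ⟩, hx⟩
    exact ⟨J, hJ, hx⟩
  · rintro ⟨J, hJ, hx⟩
    exact ⟨⟨J, hJ⟩, hx⟩

lemma tildeFun_extensive (E : Submodule R F) : E ≤ tildeFun R F o E :=
  (self_le_colonIdeal E ⊤).trans (le_tildeFun TC_top E)

lemma tildeFun_le (hinj : Function.Injective (algebraMap R F)) (h : IsSemistarOp R F o)
    {E : Submodule R F} (hE : E ≠ ⊥) : tildeFun R F o E ≤ o E := by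
  refine tildeFun_le_of fun J hJ => fun x hx => ?_
  rcases eq_or_ne x 0 with rfl | hx0
  · exact Submodule.zero_mem _
  have hJb : idealSub R F J ≠ ⊥ := idealSub_ne_bot hinj hJ.1
  have hsub : x • idealSub R F J ≤ E := by
    intro y hy
    obtain ⟨e, he, rfl⟩ := mem_smulS.1 hy
    obtain ⟨a, ha, rfl⟩ := mem_idealSub.1 he
    rw [mul_comm, ← Algebra.smul_def]
    exact hx a ha
  have h1 : o (x • idealSub R F J) ≤ o E := ssLe h (smulS_ne_bot hx0 hJb) hE hsub
  rw [ssSmul h hx0 hJb, hJ.2.2] at h1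
  refine h1 ?_
  have hx1 : x * 1 ∈ x • o (1 : Submodule R F) :=
    smulS_mem (ssExt h one_ne_bot one_mem_oneS)
  rwa [mul_one] at hx1

lemma tildeFun_mono {E E' : Submodule R F} (hEE : E ≤ E') :
    tildeFun R F o E ≤ tildeFun R F o E' :=
  tildeFun_le_of fun J hJ => (colonIdeal_mono hEE J).trans (le_tildeFun hJ E')

lemma tildeFun_smul {x : F} (hx : x ≠ 0) (E : Submodule R F) :
    tildeFun R F o (x • E) = x • tildeFun R F o E := by
  rw [tildeFun_eq_iSup, tildeFun_eq_iSup, smulS_iSup]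
  exact iSup_congr fun J => colonIdeal_smulS hx E J.1

lemma tildeFun_idem [IsDomain R] (hinj : Function.Injective (algebraMap R F))
    (h : IsSemistarOp R F o) (E : Submodule R F) :
    tildeFun R F o (tildeFun R F o E) = tildeFun R F o E := by
  refine le_antisymm ?_ (tildeFun_extensive _)
  refine tildeFun_le_of fun J1 hJ1 => fun x hx => ?_
  obtain ⟨s, hs⟩ := hJ1.2.1
  have key : ∀ t : Finset R, (∀ g ∈ t, g • x ∈ tildeFun R F o E) →
      ∃ J : Ideal R, TC o J ∧ ∀ g ∈ t, g • x ∈ colonIdeal R F E J := by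
    intro t
    induction t using Finset.induction_on with
    | empty => exact fun _ => ⟨⊤, TC_top, by simp⟩
    | @insert a t ha IH =>
      intro hmem
      obtain ⟨J1', hJ1', hJ1m⟩ := IH fun g hg => hmem g (Finset.mem_insert_of_mem hg)
      obtain ⟨J2', hJ2', hJ2m⟩ := (mem_tildeFun hinj h).1 (hmem a (Finset.mem_insert_self a t))
      refine ⟨J1' * J2', TC_mul hinj h hJ1' hJ2', fun g hg => ?_⟩
      rcases Finset.mem_insert.1 hg with rfl | hg
      · exact colonIdeal_anti Ideal.mul_le_right E hJ2m
      · exact colonIdeal_anti Ideal.mul_le_left E (hJ1m g hg)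
  have hgm : ∀ g ∈ s, g • x ∈ tildeFun R F o E := fun g hg =>
    hx g (hs ▸ Ideal.subset_span hg)
  obtain ⟨J2, hJ2c, hJ2m⟩ := key s hgm
  have hmemx : x ∈ colonIdeal R F E (J1 * J2) := by
    intro a ha
    refine Submodule.mul_induction_on ha (fun m hm n hn => ?_)
      (fun u v hu hv => by rw [add_smul]; exact Submodule.add_mem _ hu hv)
    have hmx : m • x ∈ colonIdeal R F E J2 := by
      rw [← hs] at hm
      induction hm using Submodule.span_induction with
      | mem g hg => exact hJ2m g hg
      | zero => rw [zero_smul]; exact Submodule.zero_mem _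
      | add u v _ _ hu hv => rw [add_smul]; exact Submodule.add_mem _ hu hv
      | smul r u _ hu => rw [smul_assoc]; exact Submodule.smul_mem _ r hu
    rw [mul_comm, mul_smul]
    exact hmx n hn
  exact le_tildeFun (TC_mul hinj h hJ1 hJ2c) E hmemx

lemma tildeFun_semistar [IsDomain R] (hinj : Function.Injective (algebraMap R F))
    (h : IsSemistarOp R F o) : IsSemistarOp R F (tildeFun R F o) :=
  ⟨fun x hx E _ => tildeFun_smul hx E,
   fun _E _E' _ _ hEE => tildeFun_mono hEE,
   fun E _ => tildeFun_extensive E,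
   fun E _ => tildeFun_idem hinj h E⟩

lemma tildeFun_stable [IsDomain R] (hinj : Function.Injective (algebraMap R F))
    (h : IsSemistarOp R F o) (E G : Submodule R F) :
    tildeFun R F o (E ⊓ G) = tildeFun R F o E ⊓ tildeFun R F o G := by
  refine le_antisymm (tildeFun_le_of fun J hJ => (colonIdeal_le_inf J).trans
    (inf_le_inf (le_tildeFun hJ E) (le_tildeFun hJ G))) ?_
  rintro x ⟨hxE, hxG⟩
  obtain ⟨J1, hJ1, hx1⟩ := (mem_tildeFun hinj h).1 hxE
  obtain ⟨J2, hJ2, hx2⟩ := (mem_tildeFun hinj h).1 hxG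
  exact le_tildeFun (TC_mul hinj h hJ1 hJ2) _ (colonIdeal_inf_le ⟨hx1, hx2⟩)

lemma TC_tilde_of_le [IsDomain R] (hinj : Function.Injective (algebraMap R F))
    (h : IsSemistarOp R F o) {J J₁ : Ideal R} (hJb : J ≠ ⊥) (hJf : J.FG)
    (hJ₁ : TC o J₁) (hle : J₁ ≤ J) : TC (tildeFun R F o) J := by
  refine ⟨hJb, hJf, ss_cond_of_one_mem (tildeFun_semistar hinj h)
    (idealSub_ne_bot hinj hJb) (idealSub_le_one J) ?_⟩
  refine le_tildeFun hJ₁ _ ?_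
  intro a ha
  rw [Algebra.smul_def, mul_one]
  exact algebraMap_mem_idealSub (hle ha)

lemma TC_tilde_elim [IsDomain R] (hinj : Function.Injective (algebraMap R F))
    (h : IsSemistarOp R F o) {J : Ideal R} (hJ : TC (tildeFun R F o) J) :
    ∃ J₁ : Ideal R, TC o J₁ ∧ J₁ ≤ J := by
  have h1 : (1 : F) ∈ tildeFun R F o (idealSub R F J) := by
    rw [hJ.2.2]
    exact tildeFun_extensive _ one_mem_oneS
  obtain ⟨J₁, hJ₁, hmem⟩ := (mem_tildeFun hinj h).1 h1
  refine ⟨J₁, hJ₁, fun a ha => ?_⟩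
  have := hmem a ha
  rw [Algebra.smul_def, mul_one] at this
  obtain ⟨b, hb, hba⟩ := mem_idealSub.1 this
  rwa [← hinj hba]

lemma tildeFun_tildeFun [IsDomain R] (hinj : Function.Injective (algebraMap R F))
    (h : IsSemistarOp R F o) (E : Submodule R F) :
    tildeFun R F (tildeFun R F o) E = tildeFun R F o E := by
  refine le_antisymm (tildeFun_le_of fun J hJ => ?_) (tildeFun_le_of fun J hJ => ?_)
  · obtain ⟨J₁, hJ₁, hle⟩ := TC_tilde_elim hinj h hJ
    exact (colonIdeal_anti hle E).trans (le_tildeFun hJ₁ E)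
  · exact le_tildeFun (TC_tilde_of_le hinj h hJ.1 hJ.2.1 hJ le_rfl) E

lemma tildeFun_le_tildeFun (hc : ∀ J : Ideal R, TC o J → TC o' J) (E : Submodule R F) :
    tildeFun R F o E ≤ tildeFun R F o' E :=
  tildeFun_le_of fun J hJ => le_tildeFun (hc J hJ) E

/-- Condition on submodules used in `finTypeFun`. -/
def FC (E G : Submodule R F) : Prop := G ≠ ⊥ ∧ G.FG ∧ G ≤ E

lemma le_finTypeFun {G E : Submodule R F} (hG1 : G ≠ ⊥) (hG2 : G.FG) (hG3 : G ≤ E) :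
    o G ≤ finTypeFun R F o E :=
  le_iSup_of_le G (le_iSup_of_le hG1 (le_iSup_of_le hG2 (le_iSup_of_le hG3 le_rfl)))

lemma finTypeFun_le_of {E M : Submodule R F}
    (hco : ∀ G : Submodule R F, G ≠ ⊥ → G.FG → G ≤ E → o G ≤ M) : finTypeFun R F o E ≤ M :=
  iSup_le fun G => iSup_le fun h1 => iSup_le fun h2 => iSup_le fun h3 => hco G h1 h2 h3

lemma finTypeFun_eq_iSup (o : Submodule R F → Submodule R F) (E : Submodule R F) :
    finTypeFun R F o E = ⨆ G : {G : Submodule R F // FC E G}, o G.1 :=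
  le_antisymm (finTypeFun_le_of fun G h1 h2 h3 => le_iSup_of_le ⟨G, h1, h2, h3⟩ le_rfl)
    (iSup_le fun G => le_finTypeFun G.2.1 G.2.2.1 G.2.2.2)

lemma span_singleton_ne_bot {x : F} (hx : x ≠ 0) : Submodule.span R {x} ≠ ⊥ :=
  ne_bot_iff.2 ⟨x, Submodule.mem_span_singleton_self x, hx⟩

lemma FC_nonempty {E : Submodule R F} (hE : E ≠ ⊥) : Nonempty {G : Submodule R F // FC E G} := by
  obtain ⟨e, he, he0⟩ := ne_bot_iff.1 hE
  exact ⟨⟨Submodule.span R {e}, span_singleton_ne_bot he0, Submodule.fg_span_singleton e,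
    (Submodule.span_le).2 (Set.singleton_subset_iff.2 he)⟩⟩

lemma fc_directed (h : IsSemistarOp R F o) (E : Submodule R F) :
    Directed (· ≤ ·) (fun G : {G : Submodule R F // FC E G} => o G.1) := by
  rintro ⟨G1, hG1⟩ ⟨G2, hG2⟩
  refine ⟨⟨G1 ⊔ G2, ne_bot_mono le_sup_left hG1.1, hG1.2.1.sup hG2.2.1,
    sup_le hG1.2.2 hG2.2.2⟩, ?_, ?_⟩
  · exact ssLe h hG1.1 (ne_bot_mono le_sup_left hG1.1) le_sup_left
  · exact ssLe h hG2.1 (ne_bot_mono le_sup_left hG1.1) le_sup_right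

lemma mem_finTypeFun (h : IsSemistarOp R F o) {E : Submodule R F} (hE : E ≠ ⊥) {x : F} :
    x ∈ finTypeFun R F o E ↔ ∃ G : Submodule R F, FC E G ∧ x ∈ o G := by
  rw [finTypeFun_eq_iSup]
  have : Nonempty {G : Submodule R F // FC E G} := FC_nonempty hE
  rw [Submodule.mem_iSup_of_directed _ (fc_directed h E)]
  constructor
  · rintro ⟨⟨G, hG⟩, hx⟩
    exact ⟨G, hG, hx⟩
  · rintro ⟨G, hG, hx⟩
    exact ⟨⟨G, hG⟩, hx⟩

lemma finTypeFun_le (h : IsSemistarOp R F o) {E : Submodule R F} (hE : E ≠ ⊥) :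
    finTypeFun R F o E ≤ o E :=
  finTypeFun_le_of fun _G h1 _ h3 => ssLe h h1 hE h3

lemma finTypeFun_extensive (h : IsSemistarOp R F o) (E : Submodule R F) :
    E ≤ finTypeFun R F o E := by
  intro x hx
  rcases eq_or_ne x 0 with rfl | hx0
  · exact Submodule.zero_mem _
  have h1 : Submodule.span R {x} ≤ E := by
    rwa [Submodule.span_le, Set.singleton_subset_iff]
  exact le_finTypeFun (span_singleton_ne_bot hx0) (Submodule.fg_span_singleton x) h1
    (ssExt h (span_singleton_ne_bot hx0) (Submodule.mem_span_singleton_self x))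

lemma finTypeFun_mono {E E' : Submodule R F} (hEE : E ≤ E') :
    finTypeFun R F o E ≤ finTypeFun R F o E' :=
  finTypeFun_le_of fun _G h1 h2 h3 => le_finTypeFun h1 h2 (h3.trans hEE)

lemma fg_smulS {G : Submodule R F} (hG : G.FG) (x : F) : (x • G).FG := by
  obtain ⟨s, rfl⟩ := hG
  rw [Submodule.smul_span]
  exact Submodule.fg_span ((s : Set F).toFinite.smul_set)

lemma finTypeFun_smul_le (h : IsSemistarOp R F o) {x : F} (hx : x ≠ 0) (E : Submodule R F) :
    finTypeFun R F o (x • E) ≤ x • finTypeFun R F o E := by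
  refine finTypeFun_le_of fun G h1 h2 h3 => ?_
  have hG' : G = x • (x⁻¹ • G) := (smulS_inv_smulS hx G).symm
  have h1' : x⁻¹ • G ≠ ⊥ := smulS_ne_bot (inv_ne_zero hx) h1
  have h3' : x⁻¹ • G ≤ E := by
    rw [← inv_smulS_smulS hx E]
    exact smulS_mono _ h3
  have heq : o G = x • o (x⁻¹ • G) := by
    rw [← ssSmul h hx h1', ← hG']
  rw [heq]
  exact smulS_mono x (le_finTypeFun h1' (fg_smulS h2 x⁻¹) h3')

lemma finTypeFun_smul (h : IsSemistarOp R F o) {x : F} (hx : x ≠ 0) (E : Submodule R F) :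
    finTypeFun R F o (x • E) = x • finTypeFun R F o E := by
  refine le_antisymm (finTypeFun_smul_le h hx E) ?_
  have h2 := finTypeFun_smul_le h (inv_ne_zero hx) (x • E)
  rw [inv_smulS_smulS hx] at h2
  rw [smulS_le_iff hx]
  exact h2

lemma finTypeFun_idem (h : IsSemistarOp R F o) {E : Submodule R F} (hE : E ≠ ⊥) :
    finTypeFun R F o (finTypeFun R F o E) = finTypeFun R F o E := by
  refine le_antisymm (finTypeFun_le_of fun G h1 h2 h3 => ?_) (finTypeFun_extensive h _)
  have hcomp := (Submodule.fg_iff_compact G).1 h2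
  have hne : Nonempty {G' : Submodule R F // FC E G'} := FC_nonempty hE
  have hdir := fc_directed h E
  have hsup : G ≤ sSup (Set.range fun G' : {G' : Submodule R F // FC E G'} => o G'.1) := by
    rw [sSup_range, ← finTypeFun_eq_iSup]
    exact h3
  obtain ⟨M, hMmem, hGle⟩ := (CompleteLattice.isCompactElement_iff_le_of_directed_sSup_le _ _).1
    hcomp _ (Set.range_nonempty _) hdir.directedOn_range hsup
  obtain ⟨G', rfl⟩ := hMmem
  have hle2 := ssLe h h1 (ssNeBot h G'.2.1) hGle
  rw [ssIdem h G'.2.1] at hle2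
  exact hle2.trans (le_finTypeFun G'.2.1 G'.2.2.1 G'.2.2.2)

lemma finTypeFun_semistar (h : IsSemistarOp R F o) : IsSemistarOp R F (finTypeFun R F o) :=
  ⟨fun _x hx E _ => finTypeFun_smul h hx E, fun _E _E' _ _ => finTypeFun_mono,
   fun E _ => finTypeFun_extensive h E, fun _E hE => finTypeFun_idem h hE⟩

lemma finTypeFun_finTypeFun (E : Submodule R F) :
    finTypeFun R F (finTypeFun R F o) E = finTypeFun R F o E := by
  refine le_antisymm (finTypeFun_le_of fun G _ _ h3 => finTypeFun_mono h3)
    (finTypeFun_le_of fun G h1 h2 h3 => ?_)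
  exact (le_finTypeFun (o := o) h1 h2 le_rfl).trans (le_finTypeFun h1 h2 h3)

end GenericLemmas3

end SStar

namespace SStar

section PolyLemmas

variable {D K : Type*} [CommRing D] [IsDomain D] [Field K] [Algebra D K] [IsFractionRing D K]

lemma algebraMap_P_eq : algebraMap (Polynomial D) (RatFunc K) = polyToRF D K :=
  RingHom.algebraMap_toAlgebra _

lemma polyToRF_apply (q : Polynomial D) :
    polyToRF D K q = algebraMap (Polynomial K) (RatFunc K) (q.map (algebraMap D K)) := rfl

lemma algKX_eq (x : K) :
    algebraMap K (RatFunc K) x = algebraMap (Polynomial K) (RatFunc K) (Polynomial.C x) := by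
  rw [RatFunc.algebraMap_eq_C, ← RatFunc.algebraMap_C]

lemma algKXP_injective : Function.Injective (algebraMap (Polynomial K) (RatFunc K)) :=
  IsFractionRing.injective _ _

lemma algKX_injective : Function.Injective (algebraMap K (RatFunc K)) :=
  RingHom.injective _

lemma polyToRF_injective : Function.Injective (polyToRF D K) := by
  intro p q h
  rw [polyToRF_apply, polyToRF_apply] at h
  exact Polynomial.map_injective _ (IsFractionRing.injective D K) (algKXP_injective h)

lemma polyToRF_injective' : Function.Injective (algebraMap (Polynomial D) (RatFunc K)) := by
  rw [algebraMap_P_eq]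
  exact polyToRF_injective

lemma smul_RF (a : Polynomial D) (x : RatFunc K) : a • x = polyToRF D K a * x := by
  rw [Algebra.smul_def, algebraMap_P_eq]

lemma mem_polyExt {E : Submodule D K} {f : RatFunc K} :
    f ∈ polyExt D K E ↔ ∃ p : Polynomial K, (∀ n, p.coeff n ∈ E) ∧
      f = algebraMap (Polynomial K) (RatFunc K) p := Iff.rfl

lemma algKX_mem_polyExt {E : Submodule D K} {e : K} (he : e ∈ E) :
    algebraMap K (RatFunc K) e ∈ polyExt D K E := by
  refine ⟨Polynomial.C e, fun n => ?_, algKX_eq e⟩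
  rw [Polynomial.coeff_C]
  split
  · exact he
  · exact Submodule.zero_mem E

lemma polyExt_mono {E G : Submodule D K} (h : E ≤ G) : polyExt D K E ≤ polyExt D K G := by
  rintro f ⟨p, hp, rfl⟩
  exact ⟨p, fun n => h (hp n), rfl⟩

lemma mem_contract {B : Submodule (Polynomial D) (RatFunc K)} {x : K} :
    x ∈ contractToBase D K B ↔ algebraMap K (RatFunc K) x ∈ B := Iff.rfl

lemma contract_mono {A B : Submodule (Polynomial D) (RatFunc K)} (h : A ≤ B) :
    contractToBase D K A ≤ contractToBase D K B := fun _x hx => h hx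

lemma contract_polyExt (E : Submodule D K) : contractToBase D K (polyExt D K E) = E := by
  refine le_antisymm ?_ (fun x hx => algKX_mem_polyExt hx)
  intro x hx
  obtain ⟨p, hp, heq⟩ := mem_polyExt.1 (mem_contract.1 hx)
  have hCx : Polynomial.C x = p := algKXP_injective (by rw [← algKX_eq]; exact heq)
  have h0 := hp 0
  rw [← hCx, Polynomial.coeff_C_zero] at h0
  exact h0

lemma polyExt_bot : polyExt D K (⊥ : Submodule D K) = ⊥ := by
  refine le_antisymm ?_ bot_le
  rintro f ⟨p, hp, rfl⟩
  have hp0 : p = 0 := Polynomial.ext fun n => by simpa using hp n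
  rw [hp0, map_zero]
  exact Submodule.zero_mem _

lemma polyExt_ne_bot {E : Submodule D K} (hE : E ≠ ⊥) : polyExt D K E ≠ ⊥ := by
  obtain ⟨e, he, he0⟩ := ne_bot_iff.1 hE
  refine ne_bot_iff.2 ⟨algebraMap K (RatFunc K) e, algKX_mem_polyExt he, fun h0 => he0 ?_⟩
  exact algKX_injective (by rw [h0, map_zero])

lemma exists_lift_poly {p : Polynomial K} {T : Ideal D}
    (h : ∀ n, p.coeff n ∈ idealSub D K T) :
    ∃ q : Polynomial D, (∀ n, q.coeff n ∈ T) ∧ q.map (algebraMap D K) = p := by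
  classical
  have hch : ∀ n, ∃ a : D, a ∈ T ∧ algebraMap D K a = p.coeff n := fun n => by
    obtain ⟨a, ha, haeq⟩ := mem_idealSub.1 (h n)
    exact ⟨a, ha, haeq⟩
  choose f hf1 hf2 using hch
  refine ⟨∑ n ∈ p.support, Polynomial.monomial n (f n), fun m => ?_, ?_⟩
  · rw [Polynomial.finset_sum_coeff]
    refine Submodule.sum_mem T fun n _ => ?_
    rw [Polynomial.coeff_monomial]
    split
    · exact hf1 n
    · exact Submodule.zero_mem T
  · rw [Polynomial.map_sum]
    have : ∀ n ∈ p.support, Polynomial.map (algebraMap D K) (Polynomial.monomial n (f n)) =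
        Polynomial.monomial n (p.coeff n) := fun n _ => by
      rw [Polynomial.map_monomial, hf2]
    rw [Finset.sum_congr rfl this]
    exact (Polynomial.as_sum_support p).symm

lemma idealSub_mapC (T : Ideal D) :
    idealSub (Polynomial D) (RatFunc K) (Ideal.map Polynomial.C T) =
      polyExt D K (idealSub D K T) := by
  refine le_antisymm ?_ ?_
  · intro x hx
    obtain ⟨q, hq, rfl⟩ := mem_idealSub.1 hx
    rw [algebraMap_P_eq, polyToRF_apply]
    refine ⟨q.map (algebraMap D K), fun n => ?_, rfl⟩
    rw [Polynomial.coeff_map]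
    exact algebraMap_mem_idealSub (Ideal.mem_map_C_iff.1 hq n)
  · rintro f ⟨p, hp, rfl⟩
    obtain ⟨q, hq, hqeq⟩ := exists_lift_poly hp
    refine mem_idealSub.2 ⟨q, Ideal.mem_map_C_iff.2 hq, ?_⟩
    rw [algebraMap_P_eq, polyToRF_apply, hqeq]

lemma polyExt_one :
    polyExt D K (1 : Submodule D K) = (1 : Submodule (Polynomial D) (RatFunc K)) := by
  have h := idealSub_mapC (D := D) (K := K) ⊤
  rw [Ideal.map_top, idealSub_top, idealSub_top] at h
  exact h.symm

lemma polyExt_le_one (E : Submodule D K) {T : Ideal D} :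
    polyExt D K (idealSub D K T) ≤ (1 : Submodule (Polynomial D) (RatFunc K)) := by
  rw [← polyExt_one]
  exact polyExt_mono (idealSub_le_one T)

lemma mem_contentOf_of_coeff {S : Set (RatFunc K)} {p : Polynomial K}
    (hp : algebraMap (Polynomial K) (RatFunc K) p ∈ S) (n : ℕ) :
    p.coeff n ∈ contentOf D K S :=
  Submodule.subset_span ⟨p, hp, n, rfl⟩

lemma contentOf_le {S : Set (RatFunc K)} {E : Submodule D K}
    (h : ∀ q ∈ S, q ∈ polyExt D K E) : contentOf D K S ≤ E := by
  rw [contentOf, Submodule.span_le]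
  rintro x ⟨p, hpS, n, rfl⟩
  obtain ⟨p', hp', heq⟩ := h _ hpS
  have hpp : p = p' := algKXP_injective heq
  rw [hpp]
  exact hp' n

lemma contentOf_polyExt (E : Submodule D K) :
    contentOf D K ((polyExt D K E : Set (RatFunc K))) = E := by
  refine le_antisymm (contentOf_le fun q hq => hq) (fun e he => ?_)
  have h1 : algebraMap (Polynomial K) (RatFunc K) (Polynomial.C e) ∈
      (polyExt D K E : Set (RatFunc K)) := by
    rw [← algKX_eq]
    exact algKX_mem_polyExt he
  have h2 := mem_contentOf_of_coeff (D := D) h1 0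
  rwa [Polynomial.coeff_C_zero] at h2

lemma contentOf_mono {S S' : Set (RatFunc K)} (h : S ⊆ S') :
    contentOf D K S ≤ contentOf D K S' := by
  refine Submodule.span_mono ?_
  rintro x ⟨p, hp, n, rfl⟩
  exact ⟨p, h hp, n, rfl⟩

lemma mem_smul_set_iff {z y : RatFunc K} {A : Submodule (Polynomial D) (RatFunc K)} :
    y ∈ z • (A : Set (RatFunc K)) ↔ ∃ a ∈ A, z * a = y := by
  simp only [Set.mem_smul_set, smul_eq_mul, SetLike.mem_coe]

lemma coe_smulS (z : RatFunc K) (A : Submodule (Polynomial D) (RatFunc K)) :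
    ((z • A : Submodule (Polynomial D) (RatFunc K)) : Set (RatFunc K)) =
      z • (A : Set (RatFunc K)) := rfl

lemma smul_set_smulS (z x : RatFunc K) (A : Submodule (Polynomial D) (RatFunc K)) :
    z • (((x • A : Submodule (Polynomial D) (RatFunc K))) : Set (RatFunc K)) =
      (z * x) • (A : Set (RatFunc K)) := by
  rw [coe_smulS, smul_smul]

lemma algKX_smul (d : D) (x : K) :
    algebraMap K (RatFunc K) (d • x) =
      (Polynomial.C d : Polynomial D) • algebraMap K (RatFunc K) x := by
  rw [smul_RF, polyToRF_apply, Polynomial.map_C, Algebra.smul_def, map_mul,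
    algKX_eq (algebraMap D K d)]

lemma polyExt_span (T : Set K) :
    polyExt D K (Submodule.span D T) =
      Submodule.span (Polynomial D) (algebraMap K (RatFunc K) '' T) := by
  refine le_antisymm ?_ ?_
  · have key : ∀ c ∈ Submodule.span D T,
        algebraMap K (RatFunc K) c ∈
          Submodule.span (Polynomial D) (algebraMap K (RatFunc K) '' T) := by
      intro c hc
      induction hc using Submodule.span_induction with
      | mem t ht => exact Submodule.subset_span (Set.mem_image_of_mem _ ht)
      | zero => rw [map_zero]; exact Submodule.zero_mem _
      | add u v _ _ hu hv => rw [map_add]; exact Submodule.add_mem _ hu hv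
      | smul d c _ hc => rw [algKX_smul]; exact Submodule.smul_mem _ _ hc
    rintro f ⟨p, hp, rfl⟩
    rw [Polynomial.as_sum_support p, map_sum]
    refine Submodule.sum_mem _ fun n _ => ?_
    have heq : algebraMap (Polynomial K) (RatFunc K) (Polynomial.monomial n (p.coeff n)) =
        (Polynomial.X ^ n : Polynomial D) • algebraMap K (RatFunc K) (p.coeff n) := by
      rw [smul_RF, polyToRF_apply, Polynomial.map_pow, Polynomial.map_X,
        algKX_eq, ← map_mul]
      congr 1
      rw [mul_comm, Polynomial.C_mul_X_pow_eq_monomial]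
    rw [heq]
    exact Submodule.smul_mem _ _ (key _ (hp n))
  · rw [Submodule.span_le]
    rintro f ⟨t, ht, rfl⟩
    exact algKX_mem_polyExt (Submodule.subset_span ht)

lemma polyExt_fg {F0 : Submodule D K} (h : F0.FG) : (polyExt D K F0).FG := by
  obtain ⟨s, rfl⟩ := h
  rw [polyExt_span]
  exact Submodule.fg_span ((s : Set K).toFinite.image _)

lemma exists_content_fg {G : Submodule (Polynomial D) (RatFunc K)} {E : Submodule D K}
    (hfg : G.FG) (hle : G ≤ polyExt D K E) :
    ∃ F0 : Submodule D K, F0.FG ∧ F0 ≤ E ∧ G ≤ polyExt D K F0 ∧ (G ≠ ⊥ → F0 ≠ ⊥) := by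
  classical
  obtain ⟨s, rfl⟩ := hfg
  have hch : ∀ g : {g : RatFunc K // g ∈ s}, ∃ p : Polynomial K,
      (∀ n, p.coeff n ∈ E) ∧ (g : RatFunc K) = algebraMap (Polynomial K) (RatFunc K) p :=
    fun g => hle (Submodule.subset_span g.2)
  choose pf hpf1 hpf2 using hch
  set T : Finset K := s.attach.biUnion (fun g => (pf g).support.image (pf g).coeff) with hT
  have hmemT : ∀ (g : {g : RatFunc K // g ∈ s}) (n : ℕ), (pf g).coeff n ≠ 0 →
      (pf g).coeff n ∈ T := by
    intro g n hn
    rw [hT]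
    exact Finset.mem_biUnion.2 ⟨g, Finset.mem_attach _ _,
      Finset.mem_image.2 ⟨n, Polynomial.mem_support_iff.2 hn, rfl⟩⟩
  have hTE : Submodule.span D (T : Set K) ≤ E := by
    rw [Submodule.span_le]
    intro x hx
    rw [hT] at hx
    obtain ⟨g, _, hg⟩ := Finset.mem_biUnion.1 hx
    obtain ⟨n, _, rfl⟩ := Finset.mem_image.1 hg
    exact hpf1 g n
  have hGle : Submodule.span (Polynomial D) (s : Set (RatFunc K)) ≤
      polyExt D K (Submodule.span D (T : Set K)) := by
    rw [Submodule.span_le]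
    intro g hg
    refine ⟨pf ⟨g, hg⟩, fun n => ?_, hpf2 ⟨g, hg⟩⟩
    rcases eq_or_ne ((pf ⟨g, hg⟩).coeff n) 0 with h0 | h0
    · rw [h0]; exact Submodule.zero_mem _
    · exact Submodule.subset_span (hmemT _ n h0)
  refine ⟨Submodule.span D (T : Set K), Submodule.fg_span (T : Set K).toFinite, hTE, hGle, ?_⟩
  intro hGb hF0b
  apply hGb
  rw [hF0b, polyExt_bot] at hGle
  exact le_bot_iff.1 hGle

lemma exists_content_ideal {J' : Ideal (Polynomial D)} (hfg : J'.FG) (hJb : J' ≠ ⊥) :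
    ∃ J₀ : Ideal D, J₀.FG ∧ J₀ ≠ ⊥ ∧ J' ≤ Ideal.map Polynomial.C J₀ ∧
      ∀ (E : Submodule D K) (x : K),
        (∀ a ∈ J', a • algebraMap K (RatFunc K) x ∈ polyExt D K E) →
          ∀ a ∈ J₀, a • x ∈ E := by
  classical
  obtain ⟨s, hs⟩ := hfg
  set T : Finset D := s.biUnion (fun g => g.support.image g.coeff) with hT
  have hmemT : ∀ g ∈ s, ∀ n : ℕ, (g : Polynomial D).coeff n ≠ 0 → g.coeff n ∈ T := by
    intro g hg n hn
    rw [hT]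
    exact Finset.mem_biUnion.2 ⟨g, hg,
      Finset.mem_image.2 ⟨n, Polynomial.mem_support_iff.2 hn, rfl⟩⟩
  refine ⟨Ideal.span (T : Set D), Submodule.fg_span (T : Set D).toFinite, ?_, ?_, ?_⟩
  · -- J₀ ≠ ⊥
    have hex : ∃ g ∈ s, g ≠ 0 := by
      by_contra hall
      push_neg at hall
      apply hJb
      rw [← hs, ← le_bot_iff, Ideal.span_le]
      intro g hg
      rw [SetLike.mem_coe, Submodule.mem_bot]
      exact hall g hg
    obtain ⟨g, hg, hg0⟩ := hex
    obtain ⟨n, hn⟩ : ∃ n, g.coeff n ≠ 0 := by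
      by_contra hc
      push_neg at hc
      exact hg0 (Polynomial.ext fun n => by simpa using hc n)
    exact (Submodule.ne_bot_iff _).2 ⟨g.coeff n, Ideal.subset_span (hmemT g hg n hn), hn⟩
  · -- J' ≤ map C J₀
    rw [← hs, Ideal.span_le]
    intro g hg
    rw [SetLike.mem_coe, Ideal.mem_map_C_iff]
    intro n
    rcases eq_or_ne (g.coeff n) 0 with h0 | h0
    · rw [h0]; exact Submodule.zero_mem _
    · exact Ideal.subset_span (hmemT g hg n h0)
  · -- colon transfer
    intro E x hx
    have key : ∀ c ∈ (T : Set D), c • x ∈ E := by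
      intro c hc
      rw [hT] at hc
      obtain ⟨g, hg, hc2⟩ := Finset.mem_coe.1 hc |> Finset.mem_biUnion.1
      obtain ⟨n, _, rfl⟩ := Finset.mem_image.1 hc2
      have hgJ : g ∈ J' := hs ▸ Ideal.subset_span hg
      have hmem := hx g hgJ
      rw [smul_RF, polyToRF_apply, algKX_eq, ← map_mul] at hmem
      obtain ⟨p', hp', heq⟩ := mem_polyExt.1 hmem
      have hpp : g.map (algebraMap D K) * Polynomial.C x = p' := algKXP_injective heq
      have hco := hp' n
      rw [← hpp, Polynomial.coeff_mul_C, Polynomial.coeff_map] at hco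
      rwa [Algebra.smul_def]
    exact mem_colonIdeal_span key

lemma exists_num_den (u : RatFunc K) :
    ∃ p q : Polynomial D, q ≠ 0 ∧ u * polyToRF D K q = polyToRF D K p := by
  obtain ⟨b, hb⟩ := IsLocalization.integerNormalization_map_to_map (nonZeroDivisors D) u.num
  obtain ⟨c, hc⟩ := IsLocalization.integerNormalization_map_to_map (nonZeroDivisors D) u.denom
  have hsmul : ∀ (d : D) (f : Polynomial K),
      d • f = Polynomial.C (algebraMap D K d) * f := by
    intro d f
    ext n
    simp [Polynomial.coeff_smul, Polynomial.coeff_C_mul, Algebra.smul_def]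
  set p₁ := IsLocalization.integerNormalization (nonZeroDivisors D) u.num with hp₁
  set q₁ := IsLocalization.integerNormalization (nonZeroDivisors D) u.denom with hq₁
  have hb' : p₁.map (algebraMap D K) = Polynomial.C (algebraMap D K (b : D)) * u.num := by
    rw [hb, hsmul]
  have hc' : q₁.map (algebraMap D K) = Polynomial.C (algebraMap D K (c : D)) * u.denom := by
    rw [hc, hsmul]
  have hbne : algebraMap D K (b : D) ≠ 0 := by
    have := nonZeroDivisors.coe_ne_zero b
    intro h0
    exact this (IsFractionRing.injective D K (by rw [h0, map_zero]))
  have hcne : algebraMap D K (c : D) ≠ 0 := by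
    have := nonZeroDivisors.coe_ne_zero c
    intro h0
    exact this (IsFractionRing.injective D K (by rw [h0, map_zero]))
  have hq₁0 : q₁ ≠ 0 := by
    intro h0
    have : q₁.map (algebraMap D K) = 0 := by rw [h0, Polynomial.map_zero]
    rw [hc'] at this
    exact (mul_ne_zero (by simpa using hcne) u.denom_ne_zero) this
  have hd0 : algebraMap (Polynomial K) (RatFunc K) u.denom ≠ 0 :=
    (map_ne_zero_iff _ algKXP_injective).2 u.denom_ne_zero
  have hden : u * algebraMap (Polynomial K) (RatFunc K) u.denom =
      algebraMap (Polynomial K) (RatFunc K) u.num := by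
    have h := RatFunc.num_div_denom u
    rw [div_eq_iff hd0] at h
    exact h.symm
  refine ⟨Polynomial.C (c : D) * p₁, Polynomial.C (b : D) * q₁,
    mul_ne_zero (by simpa using nonZeroDivisors.coe_ne_zero b) hq₁0, ?_⟩
  rw [polyToRF_apply, polyToRF_apply, Polynomial.map_mul, Polynomial.map_mul,
    Polynomial.map_C, Polynomial.map_C, hb', hc', map_mul, map_mul, map_mul, map_mul]
  linear_combination (algebraMap (Polynomial K) (RatFunc K) (Polynomial.C (algebraMap D K (b : D))) *
    algebraMap (Polynomial K) (RatFunc K) (Polynomial.C (algebraMap D K (c : D)))) * hden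

lemma inf_ne_bot {A B : Submodule (Polynomial D) (RatFunc K)} (hA : A ≠ ⊥) (hB : B ≠ ⊥) :
    A ⊓ B ≠ ⊥ := by
  obtain ⟨a, ha, ha0⟩ := ne_bot_iff.1 hA
  obtain ⟨b, hb, hb0⟩ := ne_bot_iff.1 hB
  obtain ⟨p, q, hq0, heq⟩ := exists_num_den (D := D) (K := K) (a / b)
  have hqRF : polyToRF D K q ≠ 0 := by
    intro h0
    exact hq0 (polyToRF_injective (by rw [h0, map_zero]))
  have heq2 : a * polyToRF D K q = b * polyToRF D K p := by
    field_simp at heq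
    rw [heq]
  refine ne_bot_iff.2 ⟨q • a, ⟨A.smul_mem q ha, ?_⟩, ?_⟩
  · show q • a ∈ B
    rw [smul_RF, mul_comm, heq2, mul_comm]
    rw [← smul_RF]
    exact B.smul_mem p hb
  · rw [smul_RF]
    exact mul_ne_zero hqRF ha0

lemma contract_iInf {ι : Sort*} (f : ι → Submodule (Polynomial D) (RatFunc K)) :
    contractToBase D K (⨅ i, f i) = ⨅ i, contractToBase D K (f i) := by
  ext x
  rw [mem_contract, Submodule.mem_iInf, Submodule.mem_iInf]
  exact forall_congr' fun i => Iff.rfl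

lemma contract_iSup_directed {ι : Sort*} [Nonempty ι]
    (f : ι → Submodule (Polynomial D) (RatFunc K)) (hdir : Directed (· ≤ ·) f) :
    contractToBase D K (⨆ i, f i) = ⨆ i, contractToBase D K (f i) := by
  refine le_antisymm ?_ (iSup_le fun i => contract_mono (le_iSup f i))
  intro x hx
  obtain ⟨i, hi⟩ := (Submodule.mem_iSup_of_directed f hdir).1 (mem_contract.1 hx)
  exact le_iSup (fun i => contractToBase D K (f i)) i hi

end PolyLemmas

end SStar

namespace SStar

section BigTriLemmas

variable {D K : Type*} [CommRing D] [IsDomain D] [Field K] [Algebra D K] [IsFractionRing D K]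
variable {star : Submodule D K → Submodule D K}

/-- Admissibility of a denominator `z` for `A`. -/
def Adm (A : Submodule (Polynomial D) (RatFunc K)) (z : RatFunc K) : Prop :=
  z ≠ 0 ∧ ∀ a ∈ A, z * a ∈ polyExt D K (⊤ : Submodule D K)

lemma bigTri_le_term {A : Submodule (Polynomial D) (RatFunc K)} {z : RatFunc K}
    (hz : Adm A z) : bigTri D K star A ≤
      z⁻¹ • polyExt D K (star (contentOf D K (z • (A : Set (RatFunc K))))) := by
  unfold bigTri bigTriT
  split_ifs with hc
  · exact iInf_le_of_le z (iInf_le_of_le hz.1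
      (iInf_le_of_le (by rw [Algebra.top_toSubmodule]; exact hz.2) le_rfl))
  · exact (hc ⟨z, hz.1, by rw [Algebra.top_toSubmodule]; exact hz.2⟩).elim

lemma le_bigTri {M A : Submodule (Polynomial D) (RatFunc K)}
    (h : ∀ z : RatFunc K, Adm A z →
      M ≤ z⁻¹ • polyExt D K (star (contentOf D K (z • (A : Set (RatFunc K)))))) :
    M ≤ bigTri D K star A := by
  unfold bigTri bigTriT
  split
  · exact le_iInf fun z => le_iInf fun h1 => le_iInf fun h2 =>
      h z ⟨h1, by rw [Algebra.top_toSubmodule] at h2; exact h2⟩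
  · exact le_top

lemma mem_bigTri {A : Submodule (Polynomial D) (RatFunc K)} {f : RatFunc K}
    (h : ∀ z : RatFunc K, Adm A z →
      f ∈ z⁻¹ • polyExt D K (star (contentOf D K (z • (A : Set (RatFunc K)))))) :
    f ∈ bigTri D K star A := by
  have hle := le_bigTri (M := Submodule.span (Polynomial D) {f}) (A := A) (star := star)
    fun z hz => by
      rw [Submodule.span_le, Set.singleton_subset_iff]
      exact h z hz
  exact hle (Submodule.mem_span_singleton_self f)

lemma adm_one {A : Submodule (Polynomial D) (RatFunc K)}
    (hA : A ≤ polyExt D K (⊤ : Submodule D K)) : Adm A 1 :=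
  ⟨one_ne_zero, fun a ha => by rw [one_mul]; exact hA ha⟩

lemma smulA_le_polyExt_content {A : Submodule (Polynomial D) (RatFunc K)} {z : RatFunc K}
    (hz : Adm A z) : ∀ a ∈ A,
      z * a ∈ polyExt D K (contentOf D K (z • (A : Set (RatFunc K)))) := by
  intro a ha
  obtain ⟨p, _, heq⟩ := mem_polyExt.1 (hz.2 a ha)
  refine ⟨p, fun n => ?_, heq⟩
  refine mem_contentOf_of_coeff ?_ n
  rw [← heq]
  exact mem_smul_set_iff.2 ⟨a, ha, rfl⟩

lemma contentOf_smul_ne_bot {A : Submodule (Polynomial D) (RatFunc K)} (hA : A ≠ ⊥)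
    {z : RatFunc K} (hz : Adm A z) :
    contentOf D K (z • (A : Set (RatFunc K))) ≠ ⊥ := by
  obtain ⟨a, ha, ha0⟩ := ne_bot_iff.1 hA
  obtain ⟨p, hp, heq⟩ := mem_polyExt.1 (smulA_le_polyExt_content hz a ha)
  have hzane : z * a ≠ 0 := mul_ne_zero hz.1 ha0
  have hp0 : p ≠ 0 := fun h0 => hzane (by rw [heq, h0, map_zero])
  have hex : ∃ n, p.coeff n ≠ 0 := by
    by_contra hc
    push_neg at hc
    exact hp0 (Polynomial.ext fun n => by simpa using hc n)
  obtain ⟨n, hn⟩ := hex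
  exact ne_bot_iff.2 ⟨p.coeff n, hp n, hn⟩

lemma bigTri_extensive (hstar : IsSemistarOp D K star)
    {A : Submodule (Polynomial D) (RatFunc K)} (hA : A ≠ ⊥) : A ≤ bigTri D K star A := by
  refine le_bigTri fun z hz => ?_
  rw [← smulS_le_iff hz.1]
  intro y hy
  obtain ⟨a, ha, rfl⟩ := mem_smulS.1 hy
  exact polyExt_mono (ssExt hstar (contentOf_smul_ne_bot hA hz))
    (smulA_le_polyExt_content hz a ha)

lemma bigTri_mono (hstar : IsSemistarOp D K star)
    {A B : Submodule (Polynomial D) (RatFunc K)} (hA : A ≠ ⊥) (hAB : A ≤ B) :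
    bigTri D K star A ≤ bigTri D K star B := by
  refine le_bigTri fun z hzB => ?_
  have hzA : Adm A z := ⟨hzB.1, fun a ha => hzB.2 a (hAB ha)⟩
  refine (bigTri_le_term hzA).trans (smulS_mono _ (polyExt_mono ?_))
  refine ssLe hstar (contentOf_smul_ne_bot hA hzA)
    (contentOf_smul_ne_bot (ne_bot_mono hAB hA) hzB) ?_
  exact contentOf_mono (Set.smul_set_mono hAB)

lemma mem_of_mem_inv_smulS {z f : RatFunc K} (hz : z ≠ 0)
    {M : Submodule (Polynomial D) (RatFunc K)} (h : f ∈ z⁻¹ • M) : z * f ∈ M := by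
  rw [mem_smulS_iff_inv (inv_ne_zero hz), inv_inv] at h
  exact h

lemma bigTri_idem (hstar : IsSemistarOp D K star)
    {A : Submodule (Polynomial D) (RatFunc K)} (hA : A ≠ ⊥) :
    bigTri D K star (bigTri D K star A) = bigTri D K star A := by
  have hA' : bigTri D K star A ≠ ⊥ := ne_bot_mono (bigTri_extensive hstar hA) hA
  refine le_antisymm (le_bigTri fun z hz => ?_) (bigTri_extensive hstar hA')
  have hterm := bigTri_le_term (star := star) hz
  have hCne : contentOf D K (z • (A : Set (RatFunc K))) ≠ ⊥ := contentOf_smul_ne_bot hA hz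
  have hzB : Adm (bigTri D K star A) z := by
    refine ⟨hz.1, fun b hb => ?_⟩
    have hmem : z * b ∈ polyExt D K (star (contentOf D K (z • (A : Set (RatFunc K))))) :=
      mem_of_mem_inv_smulS hz.1 (hterm hb)
    exact polyExt_mono le_top hmem
  have hcle : contentOf D K (z • ((bigTri D K star A : Submodule (Polynomial D) (RatFunc K)) :
      Set (RatFunc K))) ≤ star (contentOf D K (z • (A : Set (RatFunc K)))) := by
    refine contentOf_le fun q hq => ?_
    obtain ⟨b, hb, rfl⟩ := mem_smul_set_iff.1 hq
    exact mem_of_mem_inv_smulS hz.1 (hterm hb)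
  refine (bigTri_le_term hzB).trans (smulS_mono _ (polyExt_mono ?_))
  have h2 := ssLe hstar (contentOf_smul_ne_bot hA' hzB) (ssNeBot hstar hCne) hcle
  rwa [ssIdem hstar hCne] at h2

lemma adm_smul {A : Submodule (Polynomial D) (RatFunc K)} {x z : RatFunc K} (hx : x ≠ 0) :
    Adm (x • A) z ↔ Adm A (z * x) := by
  unfold Adm
  constructor
  · rintro ⟨h1, h2⟩
    refine ⟨mul_ne_zero h1 hx, fun a ha => ?_⟩
    have := h2 (x * a) (smulS_mem ha)
    rwa [← mul_assoc] at this
  · rintro ⟨h1, h2⟩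
    refine ⟨fun h0 => h1 (by rw [h0, zero_mul]), fun a' ha' => ?_⟩
    obtain ⟨a, ha, rfl⟩ := mem_smulS.1 ha'
    rw [← mul_assoc]
    exact h2 a ha

lemma bigTri_smul (hstar : IsSemistarOp D K star) {x : RatFunc K} (hx : x ≠ 0)
    {A : Submodule (Polynomial D) (RatFunc K)} (hA : A ≠ ⊥) :
    bigTri D K star (x • A) = x • bigTri D K star A := by
  refine le_antisymm ?_ ?_
  · have h1 : x⁻¹ • bigTri D K star (x • A) ≤ bigTri D K star A := by
      refine le_bigTri fun z hz => ?_
      have hw : Adm (x • A) (z * x⁻¹) := (adm_smul hx).2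
        (by rwa [mul_assoc, inv_mul_cancel₀ hx, mul_one])
      have hterm := bigTri_le_term (star := star) hw
      rw [smul_set_smulS, mul_assoc, inv_mul_cancel₀ hx, mul_one] at hterm
      have h2 := smulS_mono x⁻¹ hterm
      rw [smulS_smulS] at h2
      have hxz : x⁻¹ * (z * x⁻¹)⁻¹ = z⁻¹ := by
        rw [mul_inv_rev, inv_inv, ← mul_assoc, inv_mul_cancel₀ hx, one_mul]
      rwa [hxz] at h2
    have h2 := smulS_mono x h1
    rwa [smulS_inv_smulS hx] at h2
  · refine le_bigTri fun z hz => ?_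
    have hz' : Adm A (z * x) := (adm_smul hx).1 hz
    have hterm := bigTri_le_term (star := star) hz'
    have h2 := smulS_mono x hterm
    rw [smulS_smulS] at h2
    have hxx : x * (z * x)⁻¹ = z⁻¹ := by
      rw [mul_inv_rev, ← mul_assoc, mul_inv_cancel₀ hx, one_mul]
    rw [hxx] at h2
    rw [smul_set_smulS]
    exact h2

end BigTriLemmas

end SStar

namespace SStar

section BigTriExt

variable {D K : Type*} [CommRing D] [IsDomain D] [Field K] [Algebra D K] [IsFractionRing D K]
variable {star : Submodule D K → Submodule D K}

lemma bigTri_semistar (hstar : IsSemistarOp D K star) :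
    IsSemistarOp (Polynomial D) (RatFunc K) (bigTri D K star) :=
  ⟨fun _x hx A hA => bigTri_smul hstar hx hA,
   fun _A _B hA _ hAB => bigTri_mono hstar hA hAB,
   fun _A hA => bigTri_extensive hstar hA,
   fun _A hA => bigTri_idem hstar hA⟩

lemma polyExt_le_top (E : Submodule D K) : polyExt D K E ≤ polyExt D K ⊤ := polyExt_mono le_top

lemma bigTri_extension (hstar : IsSemistarOp D K star) :
    IsExtensionFun D K star (bigTri D K star) := by
  intro E hE
  refine le_antisymm ?_ ?_
  · intro x hx
    rw [mem_contract]
    refine mem_bigTri fun z hz => ?_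
    rw [mem_smulS_iff_inv (inv_ne_zero hz.1), inv_inv]
    obtain ⟨e, he, he0⟩ := ne_bot_iff.1 hE
    have hze : algebraMap K (RatFunc K) e ≠ 0 :=
      fun h0 => he0 (algKX_injective (by rw [h0, map_zero]))
    obtain ⟨p, _, heq⟩ := mem_polyExt.1 (hz.2 _ (algKX_mem_polyExt he))
    set C0 := contentOf D K (z • ((polyExt D K E :
      Submodule (Polynomial D) (RatFunc K)) : Set (RatFunc K))) with hC0
    have hC0ne : C0 ≠ ⊥ := contentOf_smul_ne_bot (polyExt_ne_bot hE) hz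
    have hcomp : ∀ y : K, z * algebraMap K (RatFunc K) y =
        algebraMap (Polynomial K) (RatFunc K) (Polynomial.C (y / e) * p) := by
      intro y
      have hze' : RatFunc.C e ≠ 0 := by rwa [RatFunc.algebraMap_eq_C] at hze
      rw [map_mul, ← algKX_eq, map_div₀, ← heq]
      field_simp
    have hkey : ∀ n : ℕ, (p.coeff n / e) • E ≤ C0 := by
      intro n w hw
      obtain ⟨y, hy, rfl⟩ := mem_smulS.1 hw
      have hmemS : z * algebraMap K (RatFunc K) y ∈ z • ((polyExt D K E :
          Submodule (Polynomial D) (RatFunc K)) : Set (RatFunc K)) :=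
        mem_smul_set_iff.2 ⟨_, algKX_mem_polyExt hy, rfl⟩
      rw [hcomp y] at hmemS
      have hco := mem_contentOf_of_coeff (D := D) hmemS n
      rw [Polynomial.coeff_C_mul] at hco
      have heq2 : p.coeff n / e * y = y / e * p.coeff n := by ring
      rw [heq2]
      exact hco
    refine ⟨Polynomial.C (x / e) * p, fun n => ?_, hcomp x⟩
    rw [Polynomial.coeff_C_mul]
    rcases eq_or_ne (p.coeff n) 0 with h0 | h0
    · rw [h0, mul_zero]
      exact Submodule.zero_mem _
    · have hcne : p.coeff n / e ≠ 0 := div_ne_zero h0 he0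
      have h1 : (p.coeff n / e) * x ∈ (p.coeff n / e) • star E := smulS_mem hx
      rw [← ssSmul hstar hcne hE] at h1
      have h3 := ssLe hstar (smulS_ne_bot hcne hE) hC0ne (hkey n) h1
      have heq3 : x / e * p.coeff n = p.coeff n / e * x := by ring
      rw [heq3]
      exact h3
  · have h1 : Adm (polyExt D K E) 1 := adm_one (polyExt_le_top E)
    have h2 := bigTri_le_term (star := star) h1
    rw [inv_one, one_smulS, one_smul, contentOf_polyExt] at h2
    have h3 := contract_mono (D := D) (K := K) h2
    rwa [contract_polyExt] at h3

end BigTriExt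

end SStar

namespace SStar

section CurlyLemmas

variable {D K : Type*} [CommRing D] [IsDomain D] [Field K] [Algebra D K] [IsFractionRing D K]
variable {star : Submodule D K → Submodule D K}

lemma curly_le_of {b : Submodule (Polynomial D) (RatFunc K) → Submodule (Polynomial D) (RatFunc K)}
    (hb : IsSemistarOp (Polynomial D) (RatFunc K) b) (hbe : IsExtensionFun D K star b)
    (A : Submodule (Polynomial D) (RatFunc K)) : curlyFun D K star A ≤ b A :=
  iInf_le_of_le b (iInf_le_of_le hb (iInf_le_of_le hbe le_rfl))

lemma le_curly {M A : Submodule (Polynomial D) (RatFunc K)}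
    (h : ∀ b, IsSemistarOp (Polynomial D) (RatFunc K) b → IsExtensionFun D K star b → M ≤ b A) :
    M ≤ curlyFun D K star A :=
  le_iInf fun b => le_iInf fun hb => le_iInf fun hbe => h b hb hbe

lemma curly_extensive {A : Submodule (Polynomial D) (RatFunc K)} (hA : A ≠ ⊥) :
    A ≤ curlyFun D K star A :=
  le_curly fun _b hb _ => ssExt hb hA

lemma curly_semistar : IsSemistarOp (Polynomial D) (RatFunc K) (curlyFun D K star) := by
  refine ⟨?_, ?_, fun A hA => curly_extensive hA, ?_⟩
  · intro x hx A hA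
    unfold curlyFun
    conv_rhs => rw [smulS_iInf hx]
    refine iInf_congr fun b => ?_
    conv_rhs => rw [smulS_iInf hx]
    refine iInf_congr fun hb => ?_
    conv_rhs => rw [smulS_iInf hx]
    exact iInf_congr fun hbe => ssSmul hb hx hA
  · intro A B hA hB hAB
    exact le_curly fun b hb hbe => (curly_le_of hb hbe A).trans (ssLe hb hA hB hAB)
  · intro A hA
    have hAc : curlyFun D K star A ≠ ⊥ := ne_bot_mono (curly_extensive hA) hA
    refine le_antisymm (le_curly fun b hb hbe => ?_) (curly_extensive hAc)
    have h1 : curlyFun D K star A ≤ b A := curly_le_of hb hbe A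
    have h2 := ssLe hb hAc (ssNeBot hb hA) h1
    rw [ssIdem hb hA] at h2
    exact (curly_le_of hb hbe _).trans h2

lemma curly_extension
    (hne : ∃ b, IsSemistarOp (Polynomial D) (RatFunc K) b ∧ IsExtensionFun D K star b) :
    IsExtensionFun D K star (curlyFun D K star) := by
  intro E hE
  obtain ⟨b₀, hb₀, hbe₀⟩ := hne
  refine le_antisymm ?_ ?_
  · intro x hx
    rw [mem_contract]
    unfold curlyFun
    rw [Submodule.mem_iInf]
    intro b
    rw [Submodule.mem_iInf]
    intro hb
    rw [Submodule.mem_iInf]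
    intro hbe
    have h1 := hbe E hE
    rw [h1] at hx
    exact mem_contract.1 hx
  · have h1 := curly_le_of hb₀ hbe₀ (polyExt D K E)
    exact (contract_mono h1).trans_eq (hbe₀ E hE).symm

lemma finType_extension {c : Submodule (Polynomial D) (RatFunc K) →
      Submodule (Polynomial D) (RatFunc K)} (hstar : IsSemistarOp D K star)
    (hc : IsSemistarOp (Polynomial D) (RatFunc K) c) (hce : IsExtensionFun D K star c) :
    IsExtensionFun D K (finTypeFun D K star) (finTypeFun (Polynomial D) (RatFunc K) c) := by
  intro E hE
  have hPE : polyExt D K E ≠ ⊥ := polyExt_ne_bot hE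
  rw [finTypeFun_eq_iSup c (polyExt D K E)]
  have : Nonempty {G // FC (polyExt D K E) G} := FC_nonempty hPE
  rw [contract_iSup_directed _ (fc_directed hc _)]
  refine le_antisymm ?_ ?_
  · refine finTypeFun_le_of fun F0 h1 h2 h3 => ?_
    have hFE : star F0 = contractToBase D K (c (polyExt D K F0)) := hce F0 h1
    have hGin : FC (polyExt D K E) (polyExt D K F0) :=
      ⟨polyExt_ne_bot h1, polyExt_fg h2, polyExt_mono h3⟩
    rw [hFE]
    exact le_iSup_of_le ⟨_, hGin⟩ le_rfl
  · refine iSup_le fun G => ?_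
    obtain ⟨F0, hF0fg, hF0le, hGle, hF0ne⟩ := exists_content_fg G.2.2.1 G.2.2.2
    have hne := hF0ne G.2.1
    have h1 : c G.1 ≤ c (polyExt D K F0) := ssLe hc G.2.1 (polyExt_ne_bot hne) hGle
    refine (contract_mono h1).trans ?_
    rw [← hce F0 hne]
    exact le_finTypeFun hne hF0fg hF0le

lemma tilde_extension {b : Submodule (Polynomial D) (RatFunc K) →
      Submodule (Polynomial D) (RatFunc K)} (hstar : IsSemistarOp D K star)
    (hb : IsSemistarOp (Polynomial D) (RatFunc K) b) (hbe : IsExtensionFun D K star b) :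
    IsExtensionFun D K (tildeFun D K star) (tildeFun (Polynomial D) (RatFunc K) b) := by
  have hinjD : Function.Injective (algebraMap D K) := IsFractionRing.injective D K
  have hinjP : Function.Injective (algebraMap (Polynomial D) (RatFunc K)) := polyToRF_injective'
  intro E hE
  refine le_antisymm ?_ ?_
  · refine tildeFun_le_of fun J hJ => fun x hx => ?_
    rw [mem_contract]
    have hJ'b : Ideal.map Polynomial.C J ≠ (⊥ : Ideal (Polynomial D)) := by
      obtain ⟨a, ha, ha0⟩ := Submodule.exists_mem_ne_zero_of_ne_bot hJ.1
      refine (Submodule.ne_bot_iff _).2 ⟨Polynomial.C a, Ideal.mem_map_of_mem _ ha, ?_⟩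
      simpa using ha0
    have hJ'fg : (Ideal.map Polynomial.C J).FG := Ideal.FG.map hJ.2.1 _
    have hcond : b (idealSub (Polynomial D) (RatFunc K) (Ideal.map Polynomial.C J)) = b 1 := by
      rw [idealSub_mapC]
      refine ss_cond_of_one_mem hb (polyExt_ne_bot (idealSub_ne_bot hinjD hJ.1)) ?_ ?_
      · rw [← polyExt_one]
        exact polyExt_mono (idealSub_le_one J)
      · have h1 : (1 : K) ∈ star (idealSub D K J) :=
          hJ.2.2 ▸ ssExt hstar one_ne_bot one_mem_oneS
        have h2 : (1 : K) ∈ contractToBase D K (b (polyExt D K (idealSub D K J))) := by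
          rw [← hbe _ (idealSub_ne_bot hinjD hJ.1)]
          exact h1
        have h3 := mem_contract.1 h2
        rwa [map_one] at h3
    refine le_tildeFun (R := Polynomial D) ⟨hJ'b, hJ'fg, hcond⟩ _ ?_
    intro q hq
    have hcoeff : ∀ n, q.coeff n ∈ J := Ideal.mem_map_C_iff.1 hq
    rw [smul_RF, polyToRF_apply, algKX_eq, ← map_mul]
    refine ⟨_, fun n => ?_, rfl⟩
    rw [Polynomial.coeff_mul_C, Polynomial.coeff_map, ← Algebra.smul_def]
    exact hx _ (hcoeff n)
  · intro x hx
    rw [mem_contract] at hx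
    obtain ⟨J', hJ'c, hx'⟩ := (mem_tildeFun hinjP hb).1 hx
    obtain ⟨J₀, hJ₀fg, hJ₀b, hJ'le, htrans⟩ := exists_content_ideal (K := K) hJ'c.2.1 hJ'c.1
    have hb1 : b (idealSub (Polynomial D) (RatFunc K) J') = b 1 := hJ'c.2.2
    have hle2 : idealSub (Polynomial D) (RatFunc K) J' ≤ polyExt D K (idealSub D K J₀) := by
      rw [← idealSub_mapC]
      exact idealSub_mono hJ'le
    have hmem1 : (1 : RatFunc K) ∈ b (polyExt D K (idealSub D K J₀)) := by
      have h0 : (1 : RatFunc K) ∈ b (idealSub (Polynomial D) (RatFunc K) J') :=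
        hb1 ▸ ssExt hb one_ne_bot one_mem_oneS
      exact ssLe hb (idealSub_ne_bot hinjP hJ'c.1)
        (polyExt_ne_bot (idealSub_ne_bot hinjD hJ₀b)) hle2 h0
    have hstar0 : (1 : K) ∈ star (idealSub D K J₀) := by
      rw [hbe _ (idealSub_ne_bot hinjD hJ₀b), mem_contract, map_one]
      exact hmem1
    have hcond0 : star (idealSub D K J₀) = star 1 :=
      ss_cond_of_one_mem hstar (idealSub_ne_bot hinjD hJ₀b) (idealSub_le_one _) hstar0
    refine le_tildeFun (R := D) ⟨hJ₀b, hJ₀fg, hcond0⟩ E ?_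
    exact htrans E x fun a ha => hx' a ha

end CurlyLemmas

end SStar
/- The theorem. -/

open SStar

theorem curly_finType_and_tilde (D K : Type*) [CommRing D] [IsDomain D] [Field K] [Algebra D K] [IsFractionRing D K]
    (star : Submodule D K → Submodule D K) (hstar : IsSemistarOp D K star) :
    (IsFiniteTypeFun (Polynomial D) (RatFunc K) (curlyFun D K (finTypeFun D K star)) ∧
      ∀ A : Submodule (Polynomial D) (RatFunc K), A ≠ ⊥ →
        curlyFun D K (finTypeFun D K star) A ≤
          finTypeFun (Polynomial D) (RatFunc K) (curlyFun D K star) A ∧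
        finTypeFun (Polynomial D) (RatFunc K) (curlyFun D K star) A ≤
          finTypeFun (Polynomial D) (RatFunc K) (bigTri D K star) A) ∧
    (IsStableFun (Polynomial D) (RatFunc K) (curlyFun D K (tildeFun D K star)) ∧
      IsFiniteTypeFun (Polynomial D) (RatFunc K) (curlyFun D K (tildeFun D K star)) ∧
      ∀ A : Submodule (Polynomial D) (RatFunc K), A ≠ ⊥ →
        curlyFun D K (tildeFun D K star) A =
          tildeFun (Polynomial D) (RatFunc K) (curlyFun D K (tildeFun D K star)) A ∧
        tildeFun (Polynomial D) (RatFunc K) (curlyFun D K (tildeFun D K star)) A ≤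
          tildeFun (Polynomial D) (RatFunc K) (curlyFun D K star) A ∧
        tildeFun (Polynomial D) (RatFunc K) (curlyFun D K star) A ≤
          tildeFun (Polynomial D) (RatFunc K) (bigTri D K star) A) := by
  classical
  have hinjD : Function.Injective (algebraMap D K) := IsFractionRing.injective D K
  have hinjP : Function.Injective (algebraMap (Polynomial D) (RatFunc K)) := polyToRF_injective'
  have hsf : IsSemistarOp D K (finTypeFun D K star) := finTypeFun_semistar hstar
  have hst : IsSemistarOp D K (tildeFun D K star) := tildeFun_semistar hinjD hstar
  have hBT : IsSemistarOp (Polynomial D) (RatFunc K) (bigTri D K star) := bigTri_semistar hstar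
  have hBTe : IsExtensionFun D K star (bigTri D K star) := bigTri_extension hstar
  have hBTf : IsSemistarOp (Polynomial D) (RatFunc K) (bigTri D K (finTypeFun D K star)) :=
    bigTri_semistar hsf
  have hBTfe := bigTri_extension hsf
  have hBTt : IsSemistarOp (Polynomial D) (RatFunc K) (bigTri D K (tildeFun D K star)) :=
    bigTri_semistar hst
  have hBTte := bigTri_extension hst
  have hCf : IsSemistarOp (Polynomial D) (RatFunc K) (curlyFun D K (finTypeFun D K star)) :=
    curly_semistar
  have hC : IsSemistarOp (Polynomial D) (RatFunc K) (curlyFun D K star) := curly_semistar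
  have hCt : IsSemistarOp (Polynomial D) (RatFunc K) (curlyFun D K (tildeFun D K star)) :=
    curly_semistar
  have hCfe : IsExtensionFun D K (finTypeFun D K star) (curlyFun D K (finTypeFun D K star)) :=
    curly_extension ⟨_, hBTf, hBTfe⟩
  have hCe : IsExtensionFun D K star (curlyFun D K star) := curly_extension ⟨_, hBT, hBTe⟩
  have hCte : IsExtensionFun D K (tildeFun D K star) (curlyFun D K (tildeFun D K star)) :=
    curly_extension ⟨_, hBTt, hBTte⟩
  constructor
  · constructor
    · -- ⋏^{⋆_f} is of finite type
      intro A hA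
      refine le_antisymm ?_ (finTypeFun_le hCf hA)
      have hb : IsSemistarOp (Polynomial D) (RatFunc K)
          (finTypeFun (Polynomial D) (RatFunc K) (curlyFun D K (finTypeFun D K star))) :=
        finTypeFun_semistar hCf
      have hbe0 := finType_extension hsf hCf hCfe
      have hbe : IsExtensionFun D K (finTypeFun D K star)
          (finTypeFun (Polynomial D) (RatFunc K) (curlyFun D K (finTypeFun D K star))) := by
        intro E hE
        rw [← finTypeFun_finTypeFun (o := star) E]
        exact hbe0 E hE
      exact curly_le_of hb hbe A
    · intro A hA
      constructor
      · -- ⋏^{⋆_f} ≤ (⋏^⋆)_f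
        have hb : IsSemistarOp (Polynomial D) (RatFunc K)
            (finTypeFun (Polynomial D) (RatFunc K) (curlyFun D K star)) :=
          finTypeFun_semistar hC
        have hbe : IsExtensionFun D K (finTypeFun D K star)
            (finTypeFun (Polynomial D) (RatFunc K) (curlyFun D K star)) :=
          finType_extension hstar hC hCe
        exact curly_le_of hb hbe A
      · -- (⋏^⋆)_f ≤ (▲^⋆)_f
        refine finTypeFun_le_of fun G h1 h2 h3 => ?_
        exact (curly_le_of hBT hBTe G).trans (le_finTypeFun h1 h2 h3)
  · -- part (2)
    have ht'ss : IsSemistarOp (Polynomial D) (RatFunc K)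
        (tildeFun (Polynomial D) (RatFunc K) (curlyFun D K (tildeFun D K star))) :=
      tildeFun_semistar hinjP hCt
    have ht'e0 := tilde_extension hst hCt hCte
    have ht'e : IsExtensionFun D K (tildeFun D K star)
        (tildeFun (Polynomial D) (RatFunc K) (curlyFun D K (tildeFun D K star))) := by
      intro E hE
      rw [← tildeFun_tildeFun hinjD hstar E]
      exact ht'e0 E hE
    have heq : ∀ A : Submodule (Polynomial D) (RatFunc K), A ≠ ⊥ →
        curlyFun D K (tildeFun D K star) A =
          tildeFun (Polynomial D) (RatFunc K) (curlyFun D K (tildeFun D K star)) A := by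
      intro A hA
      exact le_antisymm (curly_le_of ht'ss ht'e A) (tildeFun_le hinjP hCt hA)
    refine ⟨?_, ?_, ?_⟩
    · -- stability
      intro E G hE hG
      have hEG : E ⊓ G ≠ ⊥ := inf_ne_bot hE hG
      rw [heq _ hEG, heq _ hE, heq _ hG]
      exact tildeFun_stable hinjP hCt E G
    · -- finite type
      intro A hA
      refine le_antisymm ?_ (finTypeFun_le hCt hA)
      rw [heq A hA]
      refine tildeFun_le_of fun J hJ => fun x hx => ?_
      rcases eq_or_ne x 0 with rfl | hx0
      · exact Submodule.zero_mem _
      obtain ⟨s, hs⟩ := hJ.2.1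
      set G0 : Submodule (Polynomial D) (RatFunc K) :=
        Submodule.span (Polynomial D)
          ((fun g : Polynomial D => g • x) '' (s : Set (Polynomial D))) with hG0
      have hG0le : G0 ≤ A := by
        rw [hG0, Submodule.span_le]
        rintro y ⟨g, hg, rfl⟩
        exact hx g (hs ▸ Ideal.subset_span hg)
      have hG0fg : G0.FG := Submodule.fg_span ((s : Set (Polynomial D)).toFinite.image _)
      have hG0ne : G0 ≠ ⊥ := by
        have hex : ∃ g ∈ s, (g : Polynomial D) ≠ 0 := by
          by_contra hall
          push_neg at hall
          apply hJ.1
          rw [← hs, ← le_bot_iff, Ideal.span_le]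
          intro g hg
          rw [SetLike.mem_coe, Submodule.mem_bot]
          exact hall g hg
        obtain ⟨g, hg, hg0⟩ := hex
        refine ne_bot_iff.2 ⟨g • x, Submodule.subset_span ⟨g, hg, rfl⟩, ?_⟩
        rw [smul_RF]
        exact mul_ne_zero (fun h0 => hg0 (polyToRF_injective (by rw [h0, map_zero]))) hx0
      have hxG0 : x ∈ colonIdeal (Polynomial D) (RatFunc K) G0 J := by
        intro a ha
        rw [← hs] at ha
        induction ha using Submodule.span_induction with
        | mem g hg => exact Submodule.subset_span ⟨g, hg, rfl⟩
        | zero => rw [zero_smul]; exact Submodule.zero_mem _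
        | add u v _ _ hu hv => rw [add_smul]; exact Submodule.add_mem _ hu hv
        | smul r u _ hu => rw [smul_assoc]; exact Submodule.smul_mem _ r hu
      have hxc : x ∈ curlyFun D K (tildeFun D K star) G0 := by
        rw [heq _ hG0ne]
        exact le_tildeFun hJ G0 hxG0
      exact le_finTypeFun hG0ne hG0fg hG0le hxc
    · intro A hA
      have hcle : ∀ A' : Submodule (Polynomial D) (RatFunc K), A' ≠ ⊥ →
          curlyFun D K (tildeFun D K star) A' ≤ curlyFun D K star A' := by
        intro A' hA'
        refine le_curly fun b hb hbe => ?_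
        have htb : IsSemistarOp (Polynomial D) (RatFunc K)
            (tildeFun (Polynomial D) (RatFunc K) b) := tildeFun_semistar hinjP hb
        have htbe0 := tilde_extension hstar hb hbe
        exact (curly_le_of htb htbe0 A').trans (tildeFun_le hinjP hb hA')
      have hcondCC : ∀ J : Ideal (Polynomial D), TC (curlyFun D K (tildeFun D K star)) J →
          TC (curlyFun D K star) J := by
        rintro J ⟨h1, h2, h3⟩
        refine ⟨h1, h2, ?_⟩
        refine ss_cond_of_one_mem hC (idealSub_ne_bot hinjP h1) (idealSub_le_one J) ?_
        have hm : (1 : RatFunc K) ∈ curlyFun D K (tildeFun D K star)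
            (idealSub (Polynomial D) (RatFunc K) J) :=
          h3 ▸ curly_extensive one_ne_bot one_mem_oneS
        exact hcle _ (idealSub_ne_bot hinjP h1) hm
      have hcondCB : ∀ J : Ideal (Polynomial D), TC (curlyFun D K star) J →
          TC (bigTri D K star) J := by
        rintro J ⟨h1, h2, h3⟩
        refine ⟨h1, h2, ?_⟩
        refine ss_cond_of_one_mem hBT (idealSub_ne_bot hinjP h1) (idealSub_le_one J) ?_
        have hm : (1 : RatFunc K) ∈ curlyFun D K star
            (idealSub (Polynomial D) (RatFunc K) J) :=
          h3 ▸ curly_extensive one_ne_bot one_mem_oneS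
        exact curly_le_of hBT hBTe _ hm
      exact ⟨heq A hA, tildeFun_le_tildeFun hcondCC A, tildeFun_le_tildeFun hcondCB A⟩
end
end

section
/- Let D be an integral domain with quotient field K, let T be an overring of D, let ⋆_{{T}} be the semistar operation of D defined by E^{⋆_{{T}}} := E·T, and let ★_{{T[X]}} be the semistar operation of D[X] defined by A^{★_{{T[X]}}} := A·T[X]. Then ⋏^{⋆_{{T}}} = ★_{{T[X]}} ⪇ ▲^{⋆_{{T}}}. -/
/- Preliminaries: semistar operations on an integral domain `R` with quotient field `F`
(submodules of `F` over `R`), polynomial extension of semistar operations from `D`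
to `D[X]` (viewed inside the quotient field `K(X) = RatFunc K` of `D[X]`). -/

open Polynomial Pointwise

set_option synthInstance.maxHeartbeats 1000000
set_option maxHeartbeats 1000000

open scoped Classical

noncomputable section

section ProofHelpers

variable {D K : Type*} [CommRing D] [IsDomain D] [Field K] [Algebra D K] [IsFractionRing D K]

lemma algK_def (x : K) : algebraMap K (RatFunc K) x
    = algebraMap (Polynomial K) (RatFunc K) (Polynomial.C x) := (RatFunc.algebraMap_C x).symm

lemma algP_apply (q : Polynomial D) : algebraMap (Polynomial D) (RatFunc K) q
    = algebraMap (Polynomial K) (RatFunc K) (q.map (algebraMap D K)) := rfl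

lemma algK_mem_polyExt {E : Submodule D K} {x : K} (hx : x ∈ E) :
    algebraMap K (RatFunc K) x ∈ polyExt D K E :=
  ⟨Polynomial.C x, fun n => by
      rcases eq_or_ne n 0 with rfl | h
      · simpa using hx
      · simp [Polynomial.coeff_C, h], algK_def x⟩

lemma one_mem_polyExt {E : Submodule D K} (h : (1:K) ∈ E) : (1 : RatFunc K) ∈ polyExt D K E := by
  have := algK_mem_polyExt (D := D) (E := E) h
  rwa [map_one] at this

lemma polyExt_mono {E G : Submodule D K} (h : E ≤ G) : polyExt D K E ≤ polyExt D K G := by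
  rintro f ⟨p, hp, rfl⟩
  exact ⟨p, fun n => h (hp n), rfl⟩

lemma polyExt_mul_le (E G : Submodule D K) :
    polyExt D K E * polyExt D K G ≤ polyExt D K (E * G) := by
  rw [Submodule.mul_le]
  rintro f ⟨p, hp, rfl⟩ g ⟨q, hq, rfl⟩
  refine ⟨p * q, fun n => ?_, (map_mul _ _ _).symm⟩
  rw [Polynomial.coeff_mul]
  exact Submodule.sum_mem _ fun ij _ => Submodule.mul_mem_mul (hp ij.1) (hq ij.2)

lemma contract_polyExt (E : Submodule D K) : contractToBase D K (polyExt D K E) = E := by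
  ext x
  constructor
  · rintro ⟨p, hp, hEq⟩
    have hpc : Polynomial.C x = p := RatFunc.algebraMap_injective K (by rw [← algK_def]; exact hEq)
    have := hp 0
    rw [← hpc, Polynomial.coeff_C_zero] at this
    exact this
  · intro hx
    exact algK_mem_polyExt hx

lemma polyExt_one :
    polyExt D K (1 : Submodule D K) = (1 : Submodule (Polynomial D) (RatFunc K)) := by
  ext f
  rw [Submodule.mem_one]
  constructor
  · rintro ⟨p, hp, rfl⟩
    have : ∀ n, p.coeff n ∈ Set.range (algebraMap D K) := fun n => by
      have := hp n
      rwa [Submodule.mem_one] at this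
    obtain ⟨q, hq⟩ := (Polynomial.mem_lifts _).mp ((Polynomial.lifts_iff_coeff_lifts p).mpr this)
    exact ⟨q, by rw [algP_apply, hq]⟩
  · rintro ⟨q, rfl⟩
    rw [algP_apply]
    refine ⟨q.map (algebraMap D K), fun n => ?_, rfl⟩
    rw [Polynomial.coeff_map, Submodule.mem_one]
    exact ⟨q.coeff n, rfl⟩

lemma polyExt_mem_of {E : Submodule D K} (M : Submodule (Polynomial D) (RatFunc K))
    (hM : ∀ x ∈ E, algebraMap K (RatFunc K) x ∈ M) {f : RatFunc K}
    (hf : f ∈ polyExt D K E) : f ∈ M := by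
  obtain ⟨p, hp, rfl⟩ := hf
  have hrep : algebraMap (Polynomial K) (RatFunc K) p
      = ∑ n ∈ Finset.range (p.natDegree + 1),
        ((Polynomial.X : Polynomial D) ^ n) • algebraMap K (RatFunc K) (p.coeff n) := by
    conv_lhs => rw [Polynomial.as_sum_range' p (p.natDegree + 1) (lt_add_one _)]
    rw [map_sum]
    refine Finset.sum_congr rfl fun n _ => ?_
    rw [Algebra.smul_def, algP_apply, algK_def, Polynomial.map_pow, Polynomial.map_X,
      ← map_mul]
    congr 1
    rw [mul_comm, Polynomial.C_mul_X_pow_eq_monomial]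
  rw [hrep]
  exact Submodule.sum_mem _ fun n _ => Submodule.smul_mem _ _ (hM _ (hp n))

lemma smul_mul_submodule (x : RatFunc K) (A B : Submodule (Polynomial D) (RatFunc K)) :
    (x • A) * B = x • (A * B) := by
  apply le_antisymm
  · rw [Submodule.mul_le]
    intro a ha b hb
    obtain ⟨a', ha', rfl⟩ := Submodule.mem_map.mp ha
    have : (DistribSMul.toLinearMap (Polynomial D) (RatFunc K) x) a' * b
        = x • (a' * b) := by
      show x • a' * b = x • (a' * b)
      rw [smul_eq_mul, smul_eq_mul, mul_assoc]
    rw [this]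
    exact Submodule.smul_mem_pointwise_smul _ _ _ (Submodule.mul_mem_mul ha' hb)
  · intro y hy
    obtain ⟨m, hm, rfl⟩ := Submodule.mem_map.mp hy
    show x • m ∈ (x • A) * B
    refine Submodule.mul_induction_on hm (fun a ha b hb => ?_) (fun u v hu hv => ?_)
    · have : x • (a * b) = (x • a) * b := by simp [smul_eq_mul, mul_assoc]
      rw [this]
      exact Submodule.mul_mem_mul (Submodule.smul_mem_pointwise_smul _ _ _ ha) hb
    · rw [smul_add]
      exact Submodule.add_mem _ hu hv

end ProofHelpers

/- The theorem. -/

theorem curly_overring_extension (D K : Type*) [CommRing D] [IsDomain D] [Field K] [Algebra D K] [IsFractionRing D K] (T : Subalgebra D K) :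
    (∀ A : Submodule (Polynomial D) (RatFunc K), A ≠ ⊥ →
      curlyFun D K (fun E => E * Subalgebra.toSubmodule T) A =
        A * polyExt D K (Subalgebra.toSubmodule T)) ∧
    (∀ A : Submodule (Polynomial D) (RatFunc K), A ≠ ⊥ →
      A * polyExt D K (Subalgebra.toSubmodule T) ≤
        bigTri D K (fun E => E * Subalgebra.toSubmodule T) A) ∧
    ¬ ∀ A : Submodule (Polynomial D) (RatFunc K), A ≠ ⊥ →
      A * polyExt D K (Subalgebra.toSubmodule T) =
        bigTri D K (fun E => E * Subalgebra.toSubmodule T) A := by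
    -- abbreviations
    set Ts : Submodule D K := Subalgebra.toSubmodule T with hTs
    set o : Submodule D K → Submodule D K := fun E => E * Ts with ho
    set TX : Submodule (Polynomial D) (RatFunc K) := polyExt D K Ts with hTX
    have h1T : (1:K) ∈ Ts := T.one_mem
    have h1TX : (1 : RatFunc K) ∈ TX := one_mem_polyExt h1T
    have hTT : Ts * Ts ≤ Ts := Submodule.mul_le.mpr fun a ha b hb => T.mul_mem ha hb
    have hle_mulTX : ∀ A : Submodule (Polynomial D) (RatFunc K), A ≤ A * TX := by
      intro A a ha
      have := Submodule.mul_mem_mul ha h1TX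
      rwa [mul_one] at this
    have hTXTX : TX * TX = TX :=
      le_antisymm (le_trans (polyExt_mul_le _ _) (polyExt_mono hTT)) (hle_mulTX TX)
    -- b₀ is a semistar operation
    have hb0 : IsSemistarOp (Polynomial D) (RatFunc K) (fun A => A * TX) := by
      refine ⟨fun x _ A _ => smul_mul_submodule x A TX,
        fun A B _ _ h => mul_le_mul' h le_rfl,
        fun A _ => hle_mulTX A, fun A _ => ?_⟩
      show A * TX * TX = A * TX
      rw [mul_assoc, hTXTX]
    -- b₀ is an extension of o
    have hext0 : IsExtensionFun D K o (fun A => A * TX) := by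
      intro E _
      apply le_antisymm
      · intro x hx
        show algebraMap K (RatFunc K) x ∈ polyExt D K E * TX
        refine Submodule.mul_induction_on (C := fun y => algebraMap K (RatFunc K) y ∈ _)
          hx (fun e he t ht => ?_) (fun u v hu hv => ?_)
        · show algebraMap K (RatFunc K) (e * t) ∈ polyExt D K E * TX
          rw [map_mul]
          exact Submodule.mul_mem_mul (algK_mem_polyExt he) (algK_mem_polyExt ht)
        · show algebraMap K (RatFunc K) (u + v) ∈ polyExt D K E * TX
          rw [map_add]
          exact Submodule.add_mem _ hu hv
      · intro x hx
        have hx' : algebraMap K (RatFunc K) x ∈ polyExt D K (E * Ts) :=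
          polyExt_mul_le E Ts hx
        show x ∈ E * Ts
        rw [← contract_polyExt (E * Ts)]
        exact hx'
    -- every semistar extension b satisfies A * TX ≤ b A
    have hkey : ∀ b : Submodule (Polynomial D) (RatFunc K) → Submodule (Polynomial D) (RatFunc K),
        IsSemistarOp (Polynomial D) (RatFunc K) b → IsExtensionFun D K o b →
        ∀ A : Submodule (Polynomial D) (RatFunc K), A ≠ ⊥ → A * TX ≤ b A := by
      intro b hb hext A hA
      obtain ⟨hs1, hs2, hs3, hs4⟩ := hb
      have hOne : (1 : Submodule D K) ≠ ⊥ := by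
        intro h
        have h1 : (1:K) ∈ (1 : Submodule D K) := Submodule.one_le.mp le_rfl
        rw [h] at h1
        exact one_ne_zero ((Submodule.mem_bot _).mp h1)
      have hextT : Ts = contractToBase D K (b (polyExt D K (1 : Submodule D K))) := by
        have h := hext 1 hOne
        rw [← one_mul Ts]
        exact h
      have hPE1 : polyExt D K (1 : Submodule D K) ≠ ⊥ := by
        intro h
        have h1 := one_mem_polyExt (D := D) (E := (1 : Submodule D K)) (Submodule.one_le.mp le_rfl)
        rw [h] at h1
        exact one_ne_zero ((Submodule.mem_bot _).mp h1)
      rw [Submodule.mul_le]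
      intro a ha f hf
      rcases eq_or_ne a 0 with rfl | ha0
      · rw [zero_mul]; exact Submodule.zero_mem _
      have hfmem : f ∈ b (polyExt D K (1 : Submodule D K)) := by
        refine polyExt_mem_of _ (fun t ht => ?_) hf
        have : t ∈ contractToBase D K (b (polyExt D K (1 : Submodule D K))) := hextT ▸ ht
        exact this
      have hmem2 : a * f ∈ a • b (polyExt D K (1 : Submodule D K)) := by
        have := Submodule.smul_mem_pointwise_smul f a _ hfmem
        rwa [smul_eq_mul] at this
      rw [← hs1 a ha0 _ hPE1] at hmem2
      have hsub : a • polyExt D K (1 : Submodule D K) ≤ A := by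
        rw [polyExt_one]
        intro y hy
        rw [← SetLike.mem_coe, Submodule.coe_pointwise_smul] at hy
        obtain ⟨m, hm, rfl⟩ := hy
        rw [SetLike.mem_coe, Submodule.mem_one] at hm
        obtain ⟨q, rfl⟩ := hm
        show a • algebraMap (Polynomial D) (RatFunc K) q ∈ A
        have : a • algebraMap (Polynomial D) (RatFunc K) q = q • a := by
          rw [smul_eq_mul, Algebra.smul_def, mul_comm]
        rw [this]
        exact Submodule.smul_mem A q ha
      have hsubne : a • polyExt D K (1 : Submodule D K) ≠ ⊥ := by
        intro h
        have : a • (1 : RatFunc K) ∈ a • polyExt D K (1 : Submodule D K) :=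
          Submodule.smul_mem_pointwise_smul _ _ _
            (one_mem_polyExt (Submodule.one_le.mp le_rfl))
        rw [h, Submodule.mem_bot, smul_eq_mul, mul_one] at this
        exact ha0 this
      exact hs2 _ _ hsubne hA hsub hmem2
    refine ⟨?_, ?_, ?_⟩
    -- Part 1
    · intro A hA
      apply le_antisymm
      · exact iInf_le_of_le (fun A => A * TX) (iInf_le_of_le hb0 (iInf_le _ hext0))
      · exact le_iInf fun b => le_iInf fun hb => le_iInf fun hext => hkey b hb hext A hA
    -- Part 2
    · intro A hA
      unfold bigTri bigTriT
      split_ifs with hcond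
      · refine le_iInf fun z => le_iInf fun hz => le_iInf fun hzA => ?_
        rw [Submodule.mul_le]
        rintro a ha f ⟨q, hq, rfl⟩
        obtain ⟨p, -, hp⟩ := hzA a ha
        rw [← SetLike.mem_coe, Submodule.coe_pointwise_smul]
        refine ⟨algebraMap _ _ (p * q), ⟨p * q, fun n => ?_, rfl⟩, ?_⟩
        · rw [Polynomial.coeff_mul]
          refine Submodule.sum_mem _ fun ij _ => Submodule.mul_mem_mul ?_ (hq ij.2)
          refine Submodule.subset_span ⟨p, ⟨a, ha, ?_⟩, ij.1, rfl⟩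
          show z • a = _
          rw [smul_eq_mul]
          exact hp
        · show z⁻¹ • (algebraMap (Polynomial K) (RatFunc K) (p * q))
              = a * algebraMap (Polynomial K) (RatFunc K) q
          rw [smul_eq_mul, map_mul, ← hp]
          field_simp
      · exact le_top
    -- Part 3
    · intro hAll
      set ξ : RatFunc K := algebraMap (Polynomial K) (RatFunc K) Polynomial.X with hxi
      have hξ : ξ ≠ 0 := RatFunc.algebraMap_ne_zero Polynomial.X_ne_zero
      set A : Submodule (Polynomial D) (RatFunc K) :=
        Submodule.span (Polynomial D) (Set.range fun n : ℕ => ξ⁻¹ ^ n) with hAdef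
      have hgen : ∀ n : ℕ, ξ⁻¹ ^ n ∈ A := fun n =>
        Submodule.subset_span ⟨n, rfl⟩
      have hA : A ≠ ⊥ := by
        intro h
        have h1 : (1 : RatFunc K) ∈ A := by
          have := hgen 0
          rwa [pow_zero] at this
        rw [h, Submodule.mem_bot] at h1
        exact one_ne_zero h1
      have heq := hAll A hA
      -- the colon condition fails for A
      have hcond : ¬ ∃ z : RatFunc K, z ≠ 0 ∧ ∀ a ∈ A,
          z * a ∈ polyExt D K (Subalgebra.toSubmodule (⊤ : Subalgebra D K)) := by
        rintro ⟨z, hz, hzA⟩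
        have hn : ∀ n : ℕ, ∃ p : Polynomial K, z * ξ⁻¹ ^ n = algebraMap _ _ p := by
          intro n
          obtain ⟨p, -, hp⟩ := hzA _ (hgen n)
          exact ⟨p, hp⟩
        obtain ⟨p0, hp0⟩ := hn 0
        rw [pow_zero, mul_one] at hp0
        have hp0ne : p0 ≠ 0 := by
          rintro rfl
          rw [map_zero] at hp0
          exact hz hp0
        obtain ⟨p, hp⟩ := hn (p0.natDegree + 1)
        have hfac : p0 = p * Polynomial.X ^ (p0.natDegree + 1) := by
          apply RatFunc.algebraMap_injective K
          rw [map_mul, map_pow, ← hxi, ← hp, ← hp0]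
          rw [mul_assoc, inv_pow, inv_mul_cancel₀ (pow_ne_zero _ hξ), mul_one]
        have hpne : p ≠ 0 := by
          rintro rfl
          rw [zero_mul] at hfac
          exact hp0ne hfac
        have : p0.natDegree = p.natDegree + (p0.natDegree + 1) := by
          conv_lhs => rw [hfac]
          rw [Polynomial.natDegree_mul hpne (pow_ne_zero _ Polynomial.X_ne_zero),
            Polynomial.natDegree_X_pow]
        omega
      have hTop : bigTri D K (fun E => E * Ts) A = ⊤ := by
        unfold bigTri bigTriT
        rw [if_neg hcond]
      rw [hTop] at heq
      -- the Laurent polynomial submodule L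
      set L : Submodule (Polynomial D) (RatFunc K) :=
        { carrier := {f : RatFunc K | ∃ (n : ℕ) (p : Polynomial K),
            ξ ^ n * f = algebraMap (Polynomial K) (RatFunc K) p}
          add_mem' := by
            rintro f g ⟨m, p, hp⟩ ⟨n, q, hq⟩
            refine ⟨m + n, Polynomial.X ^ n * p + Polynomial.X ^ m * q, ?_⟩
            have : ξ ^ (m + n) * (f + g) = ξ ^ n * (ξ ^ m * f) + ξ ^ m * (ξ ^ n * g) := by
              rw [pow_add]; ring
            rw [this, hp, hq, map_add, map_mul, map_mul, map_pow, map_pow, ← hxi]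
          zero_mem' := ⟨0, 0, by simp⟩
          smul_mem' := by
            rintro c f ⟨n, p, hp⟩
            refine ⟨n, c.map (algebraMap D K) * p, ?_⟩
            have h1 : ξ ^ n * (c • f) = c • (ξ ^ n * f) := by
              rw [Algebra.smul_def, Algebra.smul_def, mul_left_comm]
            rw [h1, hp, Algebra.smul_def, algP_apply, ← map_mul] } with hLdef
      have hAL : A ≤ L := by
        rw [hAdef, Submodule.span_le]
        rintro _ ⟨n, rfl⟩
        refine ⟨n, 1, ?_⟩
        show ξ ^ n * ξ⁻¹ ^ n = _
        rw [inv_pow, mul_inv_cancel₀ (pow_ne_zero _ hξ), map_one]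
      have hATX_L : A * TX ≤ L := by
        rw [Submodule.mul_le]
        rintro a ha f ⟨q, -, rfl⟩
        obtain ⟨n, p, hp⟩ := hAL ha
        exact ⟨n, p * q, by rw [map_mul, ← hp]; ring⟩
      have hLtop : (L : Submodule (Polynomial D) (RatFunc K)) = ⊤ :=
        top_le_iff.mp (heq ▸ hATX_L)
      -- but (1 + ξ)⁻¹ ∉ L
      have h1ξ : (1 : RatFunc K) + ξ ≠ 0 := by
        rw [hxi, show (1 : RatFunc K) = algebraMap (Polynomial K) (RatFunc K) 1 from (map_one _).symm,
          ← map_add]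
        exact RatFunc.algebraMap_ne_zero (by
          intro h
          have := congrArg (fun r => Polynomial.coeff r 1) h
          simp [Polynomial.coeff_one] at this)
      have hmem : ((1 : RatFunc K) + ξ)⁻¹ ∈ L := by rw [hLtop]; trivial
      obtain ⟨n, p, hp⟩ := hmem
      have hfac : (Polynomial.X : Polynomial K) ^ n = p * (1 + Polynomial.X) := by
        apply RatFunc.algebraMap_injective K
        rw [map_mul, map_add, map_one, map_pow, ← hxi, ← hp]
        rw [mul_assoc, inv_mul_cancel₀ h1ξ, mul_one]
      have := congrArg (Polynomial.eval (-1 : K)) hfac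
      rw [Polynomial.eval_pow, Polynomial.eval_X, Polynomial.eval_mul, Polynomial.eval_add,
        Polynomial.eval_one, Polynomial.eval_X] at this
      simp only [add_neg_cancel, mul_zero] at this
      exact pow_ne_zero n (neg_ne_zero.mpr (one_ne_zero (α := K))) this
end
end
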